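/- arXiv:2306.14414 — 11 statements merged into one kernel-verified Lean document; each statement's English description precedes it below -/
import Mathlib

section
/- If W is an element of Z[ζ_p] that can be written as Σ_{i=0}^{p-1} w_i ζ_p^i with each w_i a nonnegative integer strictly less than q = p^n and Σ w_i = q, and if p^n divides W in Z[ζ_p], then W = 0. -/
open Polynomial


/-- If `W ∈ ℤ[ζ_p]` can be written as `∑ w_i ζ^i` with nonnegative integer coefficients
strictly less than `q = p^n` summing to `q`, and `p^n` divides `W` in `ℤ[ζ_p]`,
then `W = 0`. -/
theorem stmt_1 (p n : ℕ) (hp : p.Prime) (hn : 0 < n)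
    (ζ : ℂ) (hζ : ζ = Complex.exp (2 * Real.pi * Complex.I / p))
    (w : Fin p → ℕ) (hlt : ∀ i, w i < p ^ n) (hsum : ∑ i, w i = p ^ n)
    (W : ℂ) (hW : W = ∑ i, (w i : ℂ) * ζ ^ (i : ℕ))
    (hdvd : ∃ r ∈ Algebra.adjoin ℤ ({ζ} : Set ℂ), W = (p : ℂ) ^ n * r) :
    W = 0 := by
  have hp0 : p ≠ 0 := hp.ne_zero
  have hprim : IsPrimitiveRoot ζ p := hζ ▸ Complex.isPrimitiveRoot_exp p hp0
  -- sum of all p-th roots of unity is 0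
  have hgeom : ∑ i : Fin p, ζ ^ (i : ℕ) = 0 := by
    rw [Fin.sum_univ_eq_sum_range (fun i => ζ ^ i) p,
      geom_sum_eq (hprim.ne_one hp.one_lt) p, hprim.pow_eq_one, sub_self, zero_div]
  obtain ⟨r, hr, hWr⟩ := hdvd
  rw [Algebra.adjoin_singleton_eq_range_aeval] at hr
  obtain ⟨P, hP⟩ := hr
  replace hP : aeval ζ P = r := hP
  have hplast : p - 1 < p := Nat.sub_lt hp.pos one_pos
  set c : ℤ := (w ⟨p - 1, hplast⟩ : ℤ) with hc
  set Φ : ℤ[X] := cyclotomic p ℤ with hΦ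
  have hΦm : Φ.Monic := cyclotomic.monic p ℤ
  have hΦroot : aeval ζ Φ = 0 := by
    rw [hΦ, aeval_def, ← eval_map, map_cyclotomic]
    exact hprim.isRoot_cyclotomic hp.pos
  set B : ℤ[X] := P %ₘ Φ with hB
  have hBζ : aeval ζ B = aeval ζ P := by
    rw [hB, modByMonic_eq_sub_mul_div P Φ, map_sub, map_mul, hΦroot, zero_mul, sub_zero]
  set V : ℤ[X] := ∑ i : Fin p, C ((w i : ℤ) - c) * X ^ (i : ℕ) with hV
  have hVζ : aeval ζ V = W := by
    rw [hV, map_sum]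
    have : ∀ i : Fin p, aeval ζ (C ((w i : ℤ) - c) * X ^ (i : ℕ))
        = (w i : ℂ) * ζ ^ (i : ℕ) - (c : ℂ) * ζ ^ (i : ℕ) := by
      intro i
      rw [map_mul, aeval_C, map_pow, aeval_X]
      simp only [eq_intCast]
      push_cast
      ring
    rw [Finset.sum_congr rfl fun i _ => this i, Finset.sum_sub_distrib, ← Finset.mul_sum,
      hgeom, mul_zero, sub_zero, hW]
  -- coefficient computation for V
  have hVcoeff : ∀ k : ℕ, ∀ hk : k < p, V.coeff k = (w ⟨k, hk⟩ : ℤ) - c := by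
    intro k hk
    rw [hV, finset_sum_coeff]
    rw [Finset.sum_eq_single (⟨k, hk⟩ : Fin p)]
    · rw [coeff_C_mul, coeff_X_pow, if_pos rfl, mul_one]
    · intro b _ hb
      rw [coeff_C_mul, coeff_X_pow, if_neg (fun h => hb (Fin.ext h.symm)), mul_zero]
    · simp
  have hVcoeff' : ∀ k : ℕ, p ≤ k → V.coeff k = 0 := by
    intro k hk
    rw [hV, finset_sum_coeff]
    apply Finset.sum_eq_zero
    intro b _
    have hkb : ¬ k = (b : ℕ) := by
      intro h
      exact absurd hk (not_le.2 (h ▸ b.isLt))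
    rw [coeff_C_mul, coeff_X_pow, if_neg hkb, mul_zero]
  set Q : ℤ[X] := V - C ((p : ℤ) ^ n) * B with hQ
  have hQζ : aeval ζ Q = 0 := by
    rw [hQ, map_sub, map_mul, aeval_C, hBζ, hP, hVζ, hWr]
    simp only [eq_intCast]
    push_cast
    ring
  -- degree bounds
  have hdegΦ : Φ.degree = (p - 1 : ℕ) := by
    rw [hΦ, degree_cyclotomic, Nat.totient_prime hp]
  have hdegV : V.degree < (p - 1 : ℕ) := by
    rw [degree_lt_iff_coeff_zero]
    intro m hm
    rcases lt_or_ge m p with h | h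
    · have hm' : m = p - 1 := le_antisymm (Nat.le_sub_one_of_lt h) hm
      rw [hVcoeff m h]
      subst hm'
      simp [hc]
    · exact hVcoeff' m h
  have hdegB : B.degree < (p - 1 : ℕ) := hdegΦ ▸ degree_modByMonic_lt P hΦm
  have hdegQ : Q.degree < (p - 1 : ℕ) := by
    rw [hQ]
    refine lt_of_le_of_lt (degree_sub_le _ _) (max_lt hdegV ?_)
    refine lt_of_le_of_lt (le_trans (degree_mul_le _ _) ?_) hdegB
    have := degree_C_le (a := ((p : ℤ) ^ n))
    rcases le_or_gt ((C ((p:ℤ)^n)).degree + B.degree) B.degree with h | h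
    · exact h
    · calc (C ((p:ℤ)^n)).degree + B.degree ≤ 0 + B.degree := by
            exact add_le_add_left degree_C_le _
        _ = B.degree := zero_add _
  -- Q maps to 0 in ℚ[X]
  have hQ0 : Q = 0 := by
    by_contra h0
    have hQQ : (Q.map (algebraMap ℤ ℚ)) ≠ 0 := by
      rwa [Ne, Polynomial.map_eq_zero_iff (algebraMap ℤ ℚ).injective_int]
    have hroot : aeval ζ (Q.map (algebraMap ℤ ℚ)) = 0 := by
      rwa [aeval_map_algebraMap]
    have hle := minpoly.degree_le_of_ne_zero ℚ ζ hQQ hroot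
    rw [← cyclotomic_eq_minpoly_rat hprim hp.pos, degree_cyclotomic, Nat.totient_prime hp]
      at hle
    have hdeg' : (Q.map (algebraMap ℤ ℚ)).degree = Q.degree :=
      degree_map_eq_of_injective (algebraMap ℤ ℚ).injective_int Q
    rw [hdeg'] at hle
    exact absurd (lt_of_le_of_lt hle hdegQ) (lt_irrefl _)
  -- hence all coefficients equal
  have hall : ∀ i : Fin p, (w i : ℤ) = c := by
    intro i
    have h2 := congrArg (fun f => Polynomial.coeff f (i : ℕ)) hQ0
    rw [hQ] at h2
    simp only [coeff_sub, coeff_zero, sub_eq_zero, coeff_C_mul] at h2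
    have hdv : ((p : ℤ) ^ n) ∣ V.coeff i := ⟨B.coeff i, h2⟩
    have hco := hVcoeff i i.isLt
    rw [Fin.eta] at hco
    have h1 : (w i : ℤ) < (p : ℤ) ^ n := by exact_mod_cast hlt i
    have h1' : (w ⟨p - 1, hplast⟩ : ℤ) < (p : ℤ) ^ n := by exact_mod_cast hlt _
    have hlt' : |V.coeff i| < (p : ℤ) ^ n := by
      rw [hco, hc, abs_sub_lt_iff]
      constructor
      · linarith [Int.natCast_nonneg (w ⟨p - 1, hplast⟩)]
      · linarith [Int.natCast_nonneg (w i)]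
    have hz := Int.eq_zero_of_abs_lt_dvd hdv hlt'
    rw [hco] at hz
    linarith
  -- conclude
  rw [hW]
  have heach : ∀ i : Fin p, (w i : ℂ) * ζ ^ (i : ℕ) = (c : ℂ) * ζ ^ (i : ℕ) := by
    intro i
    have h2 : (w i : ℂ) = (c : ℂ) := by exact_mod_cast congrArg (Int.cast : ℤ → ℂ) (hall i)
    rw [h2]
  rw [Finset.sum_congr rfl fun i _ => heach i, ← Finset.mul_sum, hgeom, mul_zero]
end

section
/- For a finite field K of order q and invertible exponent s, one has Σ_{u∈K^×} W_u W̄_{u} = Σ_{u∈K^×} |W_u|² = q², where W_u = Σ_{x∈K} ψ(x^s − u x). More precisely, since the W_u are real, Σ_{u∈K^×} W_u² = q². -/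
open Finset in
private lemma stmt4_char_sum_zero {K : Type*} [AddGroup K] [Fintype K] (ψ : K → ℂ)
    (hadd : ∀ a b : K, ψ (a + b) = ψ a * ψ b) (b : K) (hb : ψ b ≠ 1) :
    ∑ x : K, ψ x = 0 := by
  have h : ψ b * ∑ x : K, ψ x = ∑ x : K, ψ x := by
    rw [Finset.mul_sum]
    simp_rw [← hadd]
    exact Fintype.sum_equiv (Equiv.addLeft b) _ _ (fun x => rfl)
  have h2 : (ψ b - 1) * ∑ x : K, ψ x = 0 := by rw [sub_mul, h]; ring
  rcases mul_eq_zero.mp h2 with h3 | h3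
  · exact absurd (by linear_combination h3) hb
  · exact h3

/-- `∑_{u ∈ K^×} W_u \overline{W_u} = q²`, and since the `W_u` are real,
`∑_{u ∈ K^×} W_u² = q²`. -/
theorem stmt_4 (p n s : ℕ) (hp : p.Prime) (hn : 0 < n)
    (K : Type*) [Field K] [Fintype K] [DecidableEq K] [CharP K p] [Algebra (ZMod p) K]
    (hcard : Fintype.card K = p ^ n)
    (hs : 0 < s) (hgcd : Nat.Coprime s (p ^ n - 1))
    (ζ : ℂ) (hζ : ζ = Complex.exp (2 * Real.pi * Complex.I / p))
    (ψ : K → ℂ) (hψ : ∀ x, ψ x = ζ ^ (Algebra.trace (ZMod p) K x).val)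
    (W : K → ℂ) (hW : ∀ u, W u = ∑ x : K, ψ (x ^ s - u * x)) :
    (∑ u : Kˣ, W (u : K) * (starRingEnd ℂ) (W (u : K))) = ((p : ℂ) ^ n) ^ 2
      ∧ (∑ u : Kˣ, (W (u : K)) ^ 2) = ((p : ℂ) ^ n) ^ 2 := by
  classical
  haveI : Fact p.Prime := ⟨hp⟩
  haveI : NeZero p := ⟨hp.ne_zero⟩
  -- basic facts about ζ
  have hprim : IsPrimitiveRoot ζ p := hζ ▸ Complex.isPrimitiveRoot_exp p hp.ne_zero
  have hζp : ζ ^ p = 1 := hprim.pow_eq_one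
  have hmod : ∀ k : ℕ, ζ ^ k = ζ ^ (k % p) := by
    intro k
    conv_lhs => rw [← Nat.div_add_mod k p]
    rw [pow_add, pow_mul, hζp, one_pow, one_mul]
  -- ψ is an additive character
  have hψ0 : ψ 0 = 1 := by rw [hψ, map_zero, ZMod.val_zero, pow_zero]
  have hadd : ∀ a b : K, ψ (a + b) = ψ a * ψ b := by
    intro a b
    rw [hψ, hψ, hψ, map_add, ZMod.val_add, ← hmod, pow_add]
  have hinv : ∀ t : K, ψ t * ψ (-t) = 1 := by
    intro t; rw [← hadd, add_neg_cancel, hψ0]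
  have habs : ∀ t : K, ‖ψ t‖ = 1 := by
    intro t
    rw [hψ, norm_pow, hζ, Complex.norm_exp]
    have : (2 * (Real.pi : ℂ) * Complex.I / (p : ℂ)).re = 0 := by
      simp [Complex.div_re]
    rw [this, Real.exp_zero, one_pow]
  have hconj : ∀ t : K, (starRingEnd ℂ) (ψ t) = ψ (-t) := by
    intro t
    have h1 : ψ t ≠ 0 := by
      intro h; have := hinv t; rw [h, zero_mul] at this; exact zero_ne_one this
    have h2 : (starRingEnd ℂ) (ψ t) * ψ t = 1 := by
      rw [mul_comm, Complex.mul_conj]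
      norm_cast
      rw [Complex.normSq_eq_norm_sq, habs, one_pow]
    have h3 : ψ (-t) * ψ t = 1 := by rw [mul_comm]; exact hinv t
    exact (eq_inv_of_mul_eq_one_left h2).trans (eq_inv_of_mul_eq_one_left h3).symm
  -- nontriviality of ψ
  have htr : ∃ b : K, Algebra.trace (ZMod p) K b ≠ 0 := by
    have hr : ringChar K = p := ringChar.eq K p
    subst hr
    obtain ⟨b, hb⟩ := FiniteField.trace_to_zmod_nondegenerate K (a := (1 : K)) one_ne_zero
    exact ⟨b, by rwa [one_mul] at hb⟩
  have hnontriv : ∃ b : K, ψ b ≠ 1 := by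
    obtain ⟨b, hb⟩ := htr
    refine ⟨b, ?_⟩
    rw [hψ]
    have hv : 0 < (Algebra.trace (ZMod p) K b).val := by
      refine Nat.pos_of_ne_zero fun h => hb ?_
      rwa [ZMod.val_eq_zero] at h
    exact hprim.pow_ne_one_of_pos_of_lt hv.ne' ((Algebra.trace (ZMod p) K b).val_lt)
  have hsum0 : ∑ x : K, ψ x = 0 := by
    obtain ⟨b, hb⟩ := hnontriv
    exact stmt4_char_sum_zero ψ hadd b hb
  -- orthogonality
  have hortho : ∀ a : K, ∑ x : K, ψ (a * x) = if a = 0 then ((p : ℂ) ^ n) else 0 := by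
    intro a
    rcases eq_or_ne a 0 with rfl | ha
    · simp [hψ0, hcard]
    · rw [if_neg ha, ← hsum0]
      exact Fintype.sum_equiv (Equiv.mulLeft₀ a ha) _ _ (fun x => rfl)
  -- x ↦ x^s is bijective
  have hco : (Nat.card Kˣ).Coprime s := by
    rw [Nat.card_eq_fintype_card, Fintype.card_units, hcard]
    exact hgcd.symm
  have hbij : Function.Bijective (fun x : K => x ^ s) := by
    rw [Finite.injective_iff_bijective.symm] at *
    intro x y hxy
    simp only at hxy
    rcases eq_or_ne y 0 with rfl | hy
    · rw [zero_pow hs.ne'] at hxy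
      exact pow_eq_zero_iff hs.ne' |>.mp hxy
    · rcases eq_or_ne x 0 with rfl | hx
      · rw [zero_pow hs.ne'] at hxy
        exact ((pow_eq_zero_iff hs.ne').mp hxy.symm).symm
      · have h' : (Units.mk0 x hx) ^ s = (Units.mk0 y hy) ^ s := by
          ext; simp [hxy]
        have := (powCoprime hco).injective h'
        exact congrArg Units.val this
  have hW0 : W 0 = 0 := by
    rw [hW]
    simp only [zero_mul, sub_zero]
    rw [← hsum0]
    exact Fintype.sum_bijective _ hbij _ _ (fun x => rfl)
  -- (-x)^s = -(x^s)
  have hneg : ∀ x : K, (-x) ^ s = -(x ^ s) := by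
    intro x
    rcases Nat.even_or_odd s with he | ho
    · have h2s : 2 ∣ s := he.two_dvd
      have hodd : Odd (p ^ n - 1) := by
        have := Nat.Coprime.coprime_dvd_left h2s hgcd
        exact Nat.coprime_two_left.mp this
      have hp2 : p = 2 := by
        have h1 : 1 ≤ p ^ n := Nat.one_le_pow n p hp.pos
        have : Even (p ^ n) := by
          rcases hodd with ⟨k, hk⟩
          exact ⟨k + 1, by omega⟩
        have h2p : 2 ∣ p := Nat.prime_two.dvd_of_dvd_pow (even_iff_two_dvd.mp this)
        exact (Nat.Prime.even_iff hp).mp (even_iff_two_dvd.mpr h2p)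
      haveI hc2 : CharP K 2 := by rw [← hp2]; infer_instance
      rw [CharTwo.neg_eq, CharTwo.neg_eq]
    · exact ho.neg_pow x
  -- W u is real
  have hconjW : ∀ u : K, (starRingEnd ℂ) (W u) = W u := by
    intro u
    rw [hW, map_sum]
    simp_rw [hconj]
    rw [show ∑ x : K, ψ (-(x ^ s - u * x)) = ∑ x : K, ψ ((-x) ^ s - u * (-x)) from
      Finset.sum_congr rfl fun x _ => congrArg ψ (by rw [hneg]; ring)]
    exact Fintype.sum_equiv (Equiv.neg K) _ _ (fun x => rfl)
  -- main computation over all of K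
  have hmain : ∑ u : K, W u * (starRingEnd ℂ) (W u) = ((p : ℂ) ^ n) ^ 2 := by
    have step1 : ∀ u : K, W u * (starRingEnd ℂ) (W u)
        = ∑ x : K, ∑ y : K, ψ (x ^ s - y ^ s) * ψ ((y - x) * u) := by
      intro u
      rw [hW, map_sum, Finset.sum_mul_sum]
      refine Finset.sum_congr rfl fun x _ => Finset.sum_congr rfl fun y _ => ?_
      rw [hconj, ← hadd, ← hadd]
      exact congrArg ψ (by ring)
    calc ∑ u : K, W u * (starRingEnd ℂ) (W u)
        = ∑ u : K, ∑ x : K, ∑ y : K, ψ (x ^ s - y ^ s) * ψ ((y - x) * u) :=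
          Finset.sum_congr rfl fun u _ => step1 u
      _ = ∑ x : K, ∑ y : K, ψ (x ^ s - y ^ s) * ∑ u : K, ψ ((y - x) * u) := by
          rw [Finset.sum_comm]
          refine Finset.sum_congr rfl fun x _ => ?_
          rw [Finset.sum_comm]
          exact Finset.sum_congr rfl fun y _ => (Finset.mul_sum _ _ _).symm
      _ = ∑ x : K, ((p : ℂ) ^ n) := by
          refine Finset.sum_congr rfl fun x _ => ?_
          simp_rw [hortho]
          rw [Finset.sum_eq_single_of_mem x (Finset.mem_univ x)]
          · simp [hψ0]
          · intro y _ hy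
            rw [if_neg (fun h => hy (by rwa [sub_eq_zero] at h)), mul_zero]
      _ = ((p : ℂ) ^ n) ^ 2 := by
          rw [Finset.sum_const, Finset.card_univ, hcard]
          push_cast
          ring
  -- restrict to units
  have hunits : ∀ f : K → ℂ, f 0 = 0 → ∑ u : Kˣ, f (u : K) = ∑ x : K, f x := by
    intro f hf
    rw [show ∑ x : K, f x = ∑ x ∈ Finset.univ.erase 0, f x from
      (Finset.sum_erase _ (by simp [hf])).symm]
    refine Finset.sum_bij (fun (u : Kˣ) _ => (u : K)) ?_ ?_ ?_ ?_
    · intro u _; exact Finset.mem_erase.mpr ⟨u.ne_zero, Finset.mem_univ _⟩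
    · intro u _ v _ h; exact Units.ext h
    · intro x hx
      obtain ⟨hx0, -⟩ := Finset.mem_erase.mp hx
      exact ⟨Units.mk0 x hx0, Finset.mem_univ _, rfl⟩
    · intro u _; rfl
  have part1 : (∑ u : Kˣ, W (u : K) * (starRingEnd ℂ) (W (u : K))) = ((p : ℂ) ^ n) ^ 2 := by
    rw [hunits (fun x => W x * (starRingEnd ℂ) (W x)) (by simp [hW0]), hmain]
  refine ⟨part1, ?_⟩
  rw [← part1]
  exact Finset.sum_congr rfl fun u _ => by rw [hconjW, sq]
end

section
/- Let K be a finite field of order q and s an invertible exponent. For any t₁, t₂ ∈ K^×, Σ_{u∈K^×} W_{t₁u} W_{t₂u} equals q² if t₁ = t₂ and 0 otherwise, where W_u is the Weil sum Σ_{x∈K} ψ(x^s − ux). -/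
open Finset


/-- For `t₁, t₂ ∈ K^×`, `∑_{u ∈ K^×} W_{t₁ u} W_{t₂ u}` equals `q²` if `t₁ = t₂`
and `0` otherwise. -/
theorem stmt_5 (p n s : ℕ) (hp : p.Prime) (hn : 0 < n)
    (K : Type*) [Field K] [Fintype K] [DecidableEq K] [CharP K p] [Algebra (ZMod p) K]
    (hcard : Fintype.card K = p ^ n)
    (hs : 0 < s) (hgcd : Nat.Coprime s (p ^ n - 1))
    (ζ : ℂ) (hζ : ζ = Complex.exp (2 * Real.pi * Complex.I / p))
    (ψ : K → ℂ) (hψ : ∀ x, ψ x = ζ ^ (Algebra.trace (ZMod p) K x).val)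
    (W : K → ℂ) (hW : ∀ u, W u = ∑ x : K, ψ (x ^ s - u * x))
    (t₁ t₂ : K) (ht₁ : t₁ ≠ 0) (ht₂ : t₂ ≠ 0) :
    ∑ u : Kˣ, W (t₁ * u) * W (t₂ * u) =
      if t₁ = t₂ then ((p : ℂ) ^ n) ^ 2 else 0 := by
  haveI : Fact p.Prime := ⟨hp⟩
  have hζprim : IsPrimitiveRoot ζ p := hζ ▸ Complex.isPrimitiveRoot_exp p hp.ne_zero
  have hζp : ζ ^ p = 1 := hζprim.pow_eq_one
  set Ψ : AddChar K ℂ :=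
    (AddChar.zmodChar p hζp).compAddMonoidHom (Algebra.trace (ZMod p) K).toAddMonoidHom with hΨdef
  have hΨ : ∀ x : K, Ψ x = ζ ^ (Algebra.trace (ZMod p) K x).val := fun x => rfl
  have hne : Ψ ≠ 1 := by
    have htr := (traceForm_nondegenerate (ZMod p) K).1 (1 : K)
    simp_rw [Algebra.traceForm_apply, one_mul] at htr
    refine AddChar.ne_one_iff.2 ?_
    by_contra hf
    push_neg at hf
    have : ∀ x : K, Algebra.trace (ZMod p) K x = 0 := by
      intro x
      have := hf x
      rw [hΨ x, ← pow_zero ζ] at this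
      exact (ZMod.val_eq_zero _).mp (hζprim.pow_inj (ZMod.val_lt _) hp.pos this)
    exact one_ne_zero (htr this)
  have hprim : Ψ.IsPrimitive := AddChar.IsPrimitive.of_ne_one hne
  have hψΨ : ∀ a : K, ψ a = Ψ a := fun a => by rw [hψ a, hΨ a]
  have hcardU : Fintype.card Kˣ = p ^ n - 1 := by
    rw [Fintype.card_units, hcard]
  -- the s-th power map is bijective
  have hinj : Function.Injective (fun x : K => x ^ s) := by
    intro x y hxy
    simp only at hxy
    by_cases hy : y = 0
    · subst hy
      rw [zero_pow hs.ne'] at hxy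
      exact pow_eq_zero_iff hs.ne' |>.mp hxy
    · have hx : x ≠ 0 := by
        intro hx0
        apply hy
        rw [hx0, zero_pow hs.ne'] at hxy
        exact (pow_eq_zero_iff hs.ne' |>.mp hxy.symm)
      set z : Kˣ := Units.mk0 x hx / Units.mk0 y hy with hz
      have hzs : z ^ s = 1 := by
        ext
        push_cast [hz, Units.val_mk0, div_pow]
        field_simp
        exact hxy
      have h1 : orderOf z ∣ s := orderOf_dvd_of_pow_eq_one hzs
      have h2 : orderOf z ∣ p ^ n - 1 := hcardU ▸ orderOf_dvd_card
      have : orderOf z = 1 := Nat.eq_one_of_dvd_one (hgcd ▸ Nat.dvd_gcd h1 h2)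
      have hz1 : z = 1 := orderOf_eq_one_iff.mp this
      have : (x : K) = y := by
        have := congrArg (Units.val) hz1
        push_cast [hz, Units.val_mk0] at this
        field_simp at this
        exact this
      exact this
  have hbij : Function.Bijective (fun x : K => x ^ s) :=
    Finite.injective_iff_bijective.mp hinj
  have hpow1 : ∀ x : K, x ^ s = 1 → x = 1 := by
    intro x hx
    have := hinj (a₁ := x) (a₂ := 1) (by simpa using hx)
    exact this
  -- (-a)^s = -(a^s)
  have hnegpow : ∀ a : K, (-a) ^ s = -(a ^ s) := by
    intro a
    rcases Nat.even_or_odd s with he | ho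
    · -- s even forces p = 2
      have h2 : p = 2 := by
        by_contra hp2
        have hpodd : Odd p := hp.odd_of_ne_two hp2
        have h2d : 2 ∣ p ^ n - 1 := by
          have hop : Odd (p ^ n) := hpodd.pow
          obtain ⟨k, hk⟩ := hop
          omega
        have h2s : 2 ∣ s := he.two_dvd
        have : (2:ℕ) ∣ 1 := hgcd ▸ Nat.dvd_gcd h2s h2d
        norm_num at this
      subst h2
      haveI : CharP K 2 := by assumption
      rw [CharTwo.neg_eq, CharTwo.neg_eq]
    · exact ho.neg_pow a
  -- sum over units vs sum over K
  have hKx : ∀ g : K → ℂ, ∑ u : Kˣ, g ↑u = (∑ u : K, g u) - g 0 := by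
    intro g
    have h2 : ∑ u : Kˣ, g ↑u = ∑ u ∈ Finset.univ.erase (0 : K), g u := by
      refine Finset.sum_bij' (fun u _ => (u : K))
        (fun a ha => Units.mk0 a (Finset.ne_of_mem_erase ha)) ?_ ?_ ?_ ?_ ?_
      · intro u _; exact Finset.mem_erase.2 ⟨u.ne_zero, Finset.mem_univ _⟩
      · intro a ha; exact Finset.mem_univ _
      · intro u _; ext; simp
      · intro a ha; simp
      · intro u _; rfl
    rw [h2, eq_sub_iff_add_eq, add_comm, Finset.add_sum_erase _ _ (Finset.mem_univ 0)]
  -- character sum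
  have key : ∀ b : K, ∑ x : K, Ψ (x * b) = if b = 0 then ((p : ℂ) ^ n) else 0 := by
    intro b
    have h0 := AddChar.sum_mulShift b hprim
    rw [apply_ite (Nat.cast : ℕ → ℂ)] at h0
    rw [h0, hcard]
    split_ifs with h
    · push_cast; ring
    · norm_num
  have sum0 : ∑ x : K, Ψ (x ^ s) = 0 := by
    rw [Fintype.sum_bijective _ hbij _ (fun x => Ψ x) (fun x => rfl)]
    exact AddChar.sum_eq_zero_of_ne_one hne
  -- rewrite each product of Weil sums as a double sum
  have hWu : ∀ u : K, W (t₁ * u) * W (t₂ * u)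
      = ∑ x : K, ∑ y : K, Ψ ((x ^ s + y ^ s) - u * (t₁ * x + t₂ * y)) := by
    intro u
    rw [hW, hW, Finset.sum_mul_sum]
    refine Finset.sum_congr rfl fun x _ => Finset.sum_congr rfl fun y _ => ?_
    rw [hψΨ, hψΨ, ← AddChar.map_add_eq_mul]
    congr 1
    ring
  have hswap : ∑ u : Kˣ, W (t₁ * u) * W (t₂ * u)
      = ∑ x : K, ∑ y : K, ∑ u : Kˣ, Ψ ((x ^ s + y ^ s) - ↑u * (t₁ * x + t₂ * y)) := by
    rw [Finset.sum_congr rfl fun (u : Kˣ) _ => hWu u, Finset.sum_comm]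
    exact Finset.sum_congr rfl fun x _ => Finset.sum_comm
  have inner : ∀ x y : K, ∑ u : Kˣ, Ψ ((x ^ s + y ^ s) - ↑u * (t₁ * x + t₂ * y))
      = (if t₁ * x + t₂ * y = 0 then ((p : ℂ) ^ n) * Ψ (x ^ s + y ^ s) else 0)
          - Ψ (x ^ s + y ^ s) := by
    intro x y
    rw [hKx (fun u => Ψ ((x ^ s + y ^ s) - u * (t₁ * x + t₂ * y)))]
    have h1 : ∀ u : K, Ψ ((x ^ s + y ^ s) - u * (t₁ * x + t₂ * y))
        = Ψ (x ^ s + y ^ s) * Ψ (u * (-(t₁ * x + t₂ * y))) := by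
      intro u; rw [← AddChar.map_add_eq_mul]; congr 1; ring
    simp_rw [h1]
    rw [← Finset.mul_sum, key (-(t₁ * x + t₂ * y))]
    simp only [neg_eq_zero, zero_mul, AddChar.map_zero_eq_one, mul_one]
    split_ifs with h <;> ring
  have hB : ∑ x : K, ∑ y : K, Ψ (x ^ s + y ^ s) = 0 := by
    simp_rw [AddChar.map_add_eq_mul, ← Finset.mul_sum]
    rw [← Finset.sum_mul, sum0, zero_mul]
  have hcond : ∀ x y : K, (t₁ * x + t₂ * y = 0) ↔ (y = -(t₂⁻¹ * t₁ * x)) := by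
    intro x y
    constructor
    · intro h
      field_simp
      linear_combination h
    · intro h
      subst h
      field_simp
      ring
  have hA : ∑ x : K, ∑ y : K,
        (if t₁ * x + t₂ * y = 0 then ((p : ℂ) ^ n) * Ψ (x ^ s + y ^ s) else 0)
      = (p : ℂ) ^ n * (if t₁ = t₂ then (p : ℂ) ^ n else 0) := by
    simp_rw [hcond]
    simp only [Finset.sum_ite_eq' Finset.univ, Finset.mem_univ, if_true]
    have harg : ∀ x : K, x ^ s + (-(t₂⁻¹ * t₁ * x)) ^ s
        = x ^ s * (1 - (t₂⁻¹ * t₁) ^ s) := by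
      intro x; rw [hnegpow, mul_pow, mul_pow]; ring
    simp_rw [harg]
    rw [← Finset.mul_sum]
    congr 1
    rw [Fintype.sum_bijective _ hbij (fun x => Ψ (x ^ s * (1 - (t₂⁻¹ * t₁) ^ s)))
      (fun x => Ψ (x * (1 - (t₂⁻¹ * t₁) ^ s))) (fun x => rfl),
      key (1 - (t₂⁻¹ * t₁) ^ s)]
    have hiff : (1 - (t₂⁻¹ * t₁) ^ s = 0) ↔ (t₁ = t₂) := by
      rw [sub_eq_zero, eq_comm]
      constructor
      · intro h
        have := hpow1 _ h
        field_simp at this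
        exact this
      · intro h
        subst h
        rw [inv_mul_cancel₀ ht₂, one_pow]
    rw [if_congr hiff rfl rfl]
  rw [hswap, Finset.sum_congr rfl fun x _ => Finset.sum_congr rfl fun y _ => inner x y]
  simp_rw [Finset.sum_sub_distrib]
  rw [hA, hB, sub_zero]
  split_ifs with h <;> ring
end

section
/- Let K be a finite field of order q, s an invertible exponent, k a positive integer, and t = (t₁,…,t_k) ∈ (K^×)^k. Let Q^t_{0,0} be the number of v = (v₁,…,v_k) ∈ K^k with t₁v₁+⋯+t_kv_k = 0 and v₁^s+⋯+v_k^s = 0. Then Σ_{u∈K^×} W_{t₁u}⋯W_{t_ku} = (q² Q^t_{0,0} − q^k)/(q−1). -/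
set_option maxHeartbeats 1000000

/-- For `t = (t₁, …, t_k) ∈ (K^×)^k`, with `Q^t_{0,0}` the number of `v ∈ K^k` with
`t·v = 0` and `v₁^s + ⋯ + v_k^s = 0`, one has
`∑_{u ∈ K^×} W_{t₁u} ⋯ W_{t_ku} = (q² Q^t_{0,0} − q^k)/(q−1)`. -/
theorem stmt_6 (p n s : ℕ) (hp : p.Prime) (hn : 0 < n)
    (K : Type*) [Field K] [Fintype K] [DecidableEq K] [CharP K p] [Algebra (ZMod p) K]
    (hcard : Fintype.card K = p ^ n)
    (hs : 0 < s) (hgcd : Nat.Coprime s (p ^ n - 1))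
    (ζ : ℂ) (hζ : ζ = Complex.exp (2 * Real.pi * Complex.I / p))
    (ψ : K → ℂ) (hψ : ∀ x, ψ x = ζ ^ (Algebra.trace (ZMod p) K x).val)
    (W : K → ℂ) (hW : ∀ u, W u = ∑ x : K, ψ (x ^ s - u * x))
    (k : ℕ) (hk : 0 < k) (t : Fin k → K) (ht : ∀ i, t i ≠ 0) :
    ∑ u : Kˣ, ∏ i, W (t i * u) =
      (((p : ℂ) ^ n) ^ 2 *
          (({v : Fin k → K | ∑ i, t i * v i = 0 ∧ ∑ i, v i ^ s = 0}.ncard : ℂ))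
        - ((p : ℂ) ^ n) ^ k) / ((p : ℂ) ^ n - 1) := by
  classical
  have hfact : Fact p.Prime := ⟨hp⟩
  have hfact1 : Fact (1 < p) := ⟨hp.one_lt⟩
  set q : ℂ := (p : ℂ) ^ n with hqdef
  -- ζ facts
  have hprim : IsPrimitiveRoot ζ p := hζ ▸ Complex.isPrimitiveRoot_exp p hp.ne_zero
  have hζp : ζ ^ p = 1 := hprim.pow_eq_one
  -- ψ is an additive character
  have hψ0 : ψ 0 = 1 := by rw [hψ, map_zero, ZMod.val_zero, pow_zero]
  have hpowval : ∀ m : ℕ, ζ ^ (m % p) = ζ ^ m := by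
    intro m
    conv_rhs => rw [← Nat.mod_add_div m p, pow_add, pow_mul, hζp, one_pow, mul_one]
  have hadd : ∀ x y : K, ψ (x + y) = ψ x * ψ y := by
    intro x y
    rw [hψ, hψ, hψ, map_add, ZMod.val_add, hpowval, pow_add]
  have hψsum : ∀ (S : Finset (Fin k)) (f : Fin k → K),
      ψ (∑ i ∈ S, f i) = ∏ i ∈ S, ψ (f i) := by
    intro S f
    induction S using Finset.cons_induction with
    | empty => simpa using hψ0
    | cons i S hi ih => rw [Finset.sum_cons, Finset.prod_cons, hadd, ih]
  -- ψ is nontrivial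
  have hψne : ∃ c : K, ψ c ≠ 1 := by
    obtain ⟨c, hc⟩ := Algebra.trace_surjective (ZMod p) K 1
    refine ⟨c, ?_⟩
    rw [hψ, hc, ZMod.val_one, pow_one]
    exact hprim.ne_one hp.one_lt
  have hcardC : (Fintype.card K : ℂ) = q := by rw [hcard, hqdef]; push_cast; ring
  -- orthogonality
  have hS : ∀ a : K, (∑ x : K, ψ (a * x)) = if a = 0 then q else 0 := by
    intro a
    by_cases ha : a = 0
    · rw [if_pos ha, ha]
      simp only [zero_mul, hψ0, Finset.sum_const, Finset.card_univ, nsmul_eq_mul, mul_one]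
      exact hcardC
    · simp only [ha, if_false]
      obtain ⟨c, hc⟩ := hψne
      have key : ψ (a * (a⁻¹ * c)) = ψ c := by rw [← mul_assoc, mul_inv_cancel₀ ha, one_mul]
      have h2 : ∑ x : K, ψ (a * x) = ψ c * ∑ x : K, ψ (a * x) := by
        calc ∑ x : K, ψ (a * x) = ∑ x : K, ψ (a * (x + a⁻¹ * c)) :=
              (Fintype.sum_equiv (Equiv.addRight (a⁻¹ * c)) _ _ (fun x => rfl)).symm
          _ = ∑ x : K, ψ c * ψ (a * x) := by
              refine Finset.sum_congr rfl fun x _ => ?_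
              rw [mul_add, hadd, key, mul_comm]
          _ = ψ c * ∑ x : K, ψ (a * x) := by rw [Finset.mul_sum]
      have h3 : (ψ c - 1) * ∑ x : K, ψ (a * x) = 0 := by linear_combination -h2
      rcases mul_eq_zero.mp h3 with h | h
      · exact absurd (by linear_combination h) hc
      · exact h
  -- sums over units vs sums over K
  have hunits : ∀ f : K → ℂ, (∑ u : Kˣ, f u) = (∑ x : K, f x) - f 0 := by
    intro f
    have h1 : (∑ u : Kˣ, f u) = ∑ x ∈ Finset.univ.erase (0 : K), f x := by
      refine Finset.sum_nbij (fun u => (u : K)) ?_ ?_ ?_ ?_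
      · intro u _; exact Finset.mem_erase.mpr ⟨u.ne_zero, Finset.mem_univ _⟩
      · intro u₁ _ u₂ _ h; exact Units.ext h
      · intro x hx
        exact ⟨Units.mk0 x (Finset.mem_erase.mp (Finset.mem_coe.mp hx)).1,
          Finset.mem_coe.mpr (Finset.mem_univ _), rfl⟩
      · intro u _; rfl
    rw [h1, eq_sub_iff_add_eq, Finset.sum_erase_add _ _ (Finset.mem_univ (0 : K))]
  -- the power map is bijective
  have hpowbij : Function.Bijective (fun x : K => x ^ s) := by
    have hco : (Nat.card Kˣ).Coprime s := by
      rw [Nat.card_eq_fintype_card, Fintype.card_units, hcard]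
      exact hgcd.symm
    have hinj : Function.Injective (fun x : K => x ^ s) := by
      intro x y hxy
      simp only at hxy
      rcases eq_or_ne x 0 with rfl | hx
      · rw [zero_pow hs.ne', eq_comm, pow_eq_zero_iff hs.ne'] at hxy
        exact hxy.symm
      rcases eq_or_ne y 0 with rfl | hy
      · rw [zero_pow hs.ne', pow_eq_zero_iff hs.ne'] at hxy
        exact hxy
      have h3 : powCoprime hco (Units.mk0 x hx) = powCoprime hco (Units.mk0 y hy) := by
        apply Units.ext
        simpa [powCoprime_apply] using hxy
      have := (powCoprime hco).injective h3
      exact congrArg Units.val this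
    exact (Finite.injective_iff_bijective).mp hinj
  have hW0 : (∑ x : K, ψ (x ^ s)) = 0 := by
    have h1 : (∑ x : K, ψ (x ^ s)) = ∑ y : K, ψ y :=
      Fintype.sum_bijective _ hpowbij _ _ (fun x => rfl)
    have h2 := hS 1
    rw [if_neg one_ne_zero] at h2
    rw [h1, ← h2]
    exact Finset.sum_congr rfl fun x _ => by rw [one_mul]
  -- abbreviations
  set A : Finset (Fin k → K) := Finset.univ.filter (fun v => (∑ i, t i * v i) = 0) with hAdef
  set Qf : Finset (Fin k → K) :=
    Finset.univ.filter (fun v => (∑ i, t i * v i) = 0 ∧ (∑ i, v i ^ s) = 0) with hQdef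
  set T : ℂ := ∑ v ∈ A, ψ (∑ i, v i ^ s) with hTdef
  -- q and related nonvanishing
  have h2le : 1 < p ^ n := Nat.one_lt_pow hn.ne' hp.one_lt
  have hqnat : q = ((p ^ n : ℕ) : ℂ) := by rw [hqdef]; push_cast; ring
  have hq1 : q - 1 ≠ 0 := by
    rw [sub_ne_zero, hqnat]
    exact_mod_cast h2le.ne'
  have hq0 : q ≠ 0 := by
    rw [hqnat]
    exact_mod_cast (Nat.one_le_iff_ne_zero.mp h2le.le)
  -- Step 1: LHS = q * T
  have hstep1 : ∀ u : Kˣ, (∏ i, W (t i * u)) =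
      ∑ v : Fin k → K, ψ (∑ i, v i ^ s) * ψ (-((u : K) * ∑ i, t i * v i)) := by
    intro u
    calc ∏ i, W (t i * u) = ∏ i, ∑ x : K, ψ (x ^ s - t i * (u : K) * x) :=
          Finset.prod_congr rfl fun i _ => hW _
      _ = ∑ v ∈ Fintype.piFinset (fun _ : Fin k => (Finset.univ : Finset K)),
            ∏ i, ψ (v i ^ s - t i * (u : K) * v i) := Finset.prod_univ_sum _ _
      _ = ∑ v : Fin k → K, ∏ i, ψ (v i ^ s - t i * (u : K) * v i) := by
            rw [Fintype.piFinset_univ]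
      _ = ∑ v : Fin k → K, ψ (∑ i, v i ^ s) * ψ (-((u : K) * ∑ i, t i * v i)) := by
            refine Finset.sum_congr rfl fun v _ => ?_
            rw [← hψsum, ← hadd]
            congr 1
            rw [Finset.mul_sum, ← Finset.sum_neg_distrib, ← Finset.sum_add_distrib]
            exact Finset.sum_congr rfl fun i _ => by ring
  have hinner : ∀ v : Fin k → K, (∑ u : Kˣ, ψ (-((u : K) * ∑ i, t i * v i))) =
      (if (∑ i, t i * v i) = 0 then q else 0) - 1 := by
    intro v
    have h1 : ∀ x : K, ψ (-(x * ∑ i, t i * v i)) = ψ ((-(∑ i, t i * v i)) * x) := by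
      intro x; congr 1; ring
    calc ∑ u : Kˣ, ψ (-((u : K) * ∑ i, t i * v i))
        = ∑ u : Kˣ, ψ ((-(∑ i, t i * v i)) * (u : K)) :=
          Finset.sum_congr rfl fun u _ => h1 u
      _ = (∑ x : K, ψ ((-(∑ i, t i * v i)) * x)) - ψ ((-(∑ i, t i * v i)) * 0) :=
          hunits (fun x => ψ ((-(∑ i, t i * v i)) * x))
      _ = (if (∑ i, t i * v i) = 0 then q else 0) - 1 := by
          rw [hS, mul_zero, hψ0]
          simp only [neg_eq_zero]
  have hsum_b : (∑ v : Fin k → K, ψ (∑ i, v i ^ s)) = 0 := by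
    calc ∑ v : Fin k → K, ψ (∑ i, v i ^ s)
        = ∑ v : Fin k → K, ∏ i, ψ (v i ^ s) :=
          Finset.sum_congr rfl fun v _ => hψsum _ _
      _ = ∑ v ∈ Fintype.piFinset (fun _ : Fin k => (Finset.univ : Finset K)),
            ∏ i, ψ (v i ^ s) := by rw [Fintype.piFinset_univ]
      _ = ∏ i : Fin k, ∑ x : K, ψ (x ^ s) :=
          (Finset.prod_univ_sum (fun _ : Fin k => (Finset.univ : Finset K))
            (fun _ x => ψ (x ^ s))).symm
      _ = 0 := Finset.prod_eq_zero (Finset.mem_univ (⟨0, hk⟩ : Fin k)) hW0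
  have hLHS : (∑ u : Kˣ, ∏ i, W (t i * u)) = q * T := by
    calc ∑ u : Kˣ, ∏ i, W (t i * u)
        = ∑ u : Kˣ, ∑ v : Fin k → K,
            ψ (∑ i, v i ^ s) * ψ (-((u : K) * ∑ i, t i * v i)) :=
          Finset.sum_congr rfl fun u _ => hstep1 u
      _ = ∑ v : Fin k → K, ∑ u : Kˣ,
            ψ (∑ i, v i ^ s) * ψ (-((u : K) * ∑ i, t i * v i)) := Finset.sum_comm
      _ = ∑ v : Fin k → K,
            ψ (∑ i, v i ^ s) * ((if (∑ i, t i * v i) = 0 then q else 0) - 1) := by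
          refine Finset.sum_congr rfl fun v _ => ?_
          rw [← Finset.mul_sum, hinner]
      _ = (∑ v : Fin k → K, ψ (∑ i, v i ^ s) * (if (∑ i, t i * v i) = 0 then q else 0))
            - ∑ v : Fin k → K, ψ (∑ i, v i ^ s) := by
          rw [← Finset.sum_sub_distrib]
          exact Finset.sum_congr rfl fun v _ => by ring
      _ = ∑ v : Fin k → K, (if (∑ i, t i * v i) = 0 then q * ψ (∑ i, v i ^ s) else 0) := by
          rw [hsum_b, sub_zero]
          refine Finset.sum_congr rfl fun v _ => ?_
          split <;> ring
      _ = ∑ v ∈ A, q * ψ (∑ i, v i ^ s) := (Finset.sum_filter _ _).symm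
      _ = q * T := by rw [hTdef, Finset.mul_sum]
  -- counting A
  have hA : (A.card : ℂ) * q = q ^ k := by
    have key : ∀ c : K, (∑ v : Fin k → K, ψ (c * ∑ i, t i * v i)) =
        if c = 0 then q ^ k else 0 := by
      intro c
      have h1 : ∀ v : Fin k → K, ψ (c * ∑ i, t i * v i) = ∏ i, ψ ((c * t i) * v i) := by
        intro v
        rw [← hψsum]
        congr 1
        rw [Finset.mul_sum]
        exact Finset.sum_congr rfl fun i _ => by ring
      calc ∑ v : Fin k → K, ψ (c * ∑ i, t i * v i)
          = ∑ v : Fin k → K, ∏ i, ψ ((c * t i) * v i) :=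
            Finset.sum_congr rfl fun v _ => h1 v
        _ = ∑ v ∈ Fintype.piFinset (fun _ : Fin k => (Finset.univ : Finset K)),
              ∏ i, ψ ((c * t i) * v i) := by rw [Fintype.piFinset_univ]
        _ = ∏ i : Fin k, ∑ x : K, ψ ((c * t i) * x) :=
            (Finset.prod_univ_sum (fun _ : Fin k => (Finset.univ : Finset K))
              (fun i x => ψ ((c * t i) * x))).symm
        _ = if c = 0 then q ^ k else 0 := by
            by_cases hc : c = 0
            · rw [if_pos hc]
              calc ∏ i : Fin k, ∑ x : K, ψ ((c * t i) * x)
                  = ∏ i : Fin k, q := by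
                    refine Finset.prod_congr rfl fun i _ => ?_
                    rw [hS, if_pos (by rw [hc, zero_mul])]
                _ = q ^ k := by rw [Finset.prod_const, Finset.card_univ, Fintype.card_fin]
            · rw [if_neg hc]
              refine Finset.prod_eq_zero (Finset.mem_univ (⟨0, hk⟩ : Fin k)) ?_
              rw [hS, if_neg (mul_ne_zero hc (ht _))]
    have lhs1 : (∑ c : K, ∑ v : Fin k → K, ψ (c * ∑ i, t i * v i)) = q ^ k := by
      calc ∑ c : K, ∑ v : Fin k → K, ψ (c * ∑ i, t i * v i)
          = ∑ c : K, (if c = 0 then q ^ k else 0) :=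
            Finset.sum_congr rfl fun c _ => key c
        _ = q ^ k := by rw [Finset.sum_ite_eq' Finset.univ (0 : K) (fun _ => q ^ k)]; simp
    have lhs2 : (∑ c : K, ∑ v : Fin k → K, ψ (c * ∑ i, t i * v i)) = (A.card : ℂ) * q := by
      rw [Finset.sum_comm]
      calc ∑ v : Fin k → K, ∑ c : K, ψ (c * ∑ i, t i * v i)
          = ∑ v : Fin k → K, (if (∑ i, t i * v i) = 0 then q else 0) := by
            refine Finset.sum_congr rfl fun v _ => ?_
            rw [← hS (∑ i, t i * v i)]
            exact Finset.sum_congr rfl fun c _ => by rw [mul_comm]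
        _ = ∑ v ∈ A, q := (Finset.sum_filter _ _).symm
        _ = (A.card : ℂ) * q := by rw [Finset.sum_const, nsmul_eq_mul]
    rw [← lhs2, lhs1]
  -- the scaling argument
  have hscale : ∀ c : K, c ≠ 0 → (∑ v ∈ A, ψ (c * ∑ i, v i ^ s)) = T := by
    intro c hc
    obtain ⟨d, hd⟩ := hpowbij.surjective c
    simp only at hd
    have hd0 : d ≠ 0 := by
      rintro rfl
      apply hc
      rw [← hd, zero_pow hs.ne']
    rw [hTdef]
    refine Finset.sum_nbij' (fun v => fun i => d * v i) (fun v => fun i => d⁻¹ * v i)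
      ?_ ?_ ?_ ?_ ?_
    · intro v hv
      rw [hAdef, Finset.mem_filter] at hv ⊢
      refine ⟨Finset.mem_univ _, ?_⟩
      show (∑ i, t i * (d * v i)) = 0
      have h5 : (∑ i, t i * (d * v i)) = d * ∑ i, t i * v i := by
        rw [Finset.mul_sum]; exact Finset.sum_congr rfl fun i _ => by ring
      rw [h5, hv.2, mul_zero]
    · intro v hv
      rw [hAdef, Finset.mem_filter] at hv ⊢
      refine ⟨Finset.mem_univ _, ?_⟩
      show (∑ i, t i * (d⁻¹ * v i)) = 0
      have h5 : (∑ i, t i * (d⁻¹ * v i)) = d⁻¹ * ∑ i, t i * v i := by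
        rw [Finset.mul_sum]; exact Finset.sum_congr rfl fun i _ => by ring
      rw [h5, hv.2, mul_zero]
    · intro v _; funext i
      show d⁻¹ * (d * v i) = v i
      rw [← mul_assoc, inv_mul_cancel₀ hd0, one_mul]
    · intro v _; funext i
      show d * (d⁻¹ * v i) = v i
      rw [← mul_assoc, mul_inv_cancel₀ hd0, one_mul]
    · intro v _
      show ψ (c * ∑ i, v i ^ s) = ψ (∑ i, (d * v i) ^ s)
      congr 1
      rw [← hd, Finset.mul_sum]
      exact Finset.sum_congr rfl fun i _ => (mul_pow d (v i) s).symm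
  -- counting Qf
  have hQ : q * (Qf.card : ℂ) = (A.card : ℂ) + (q - 1) * T := by
    have lhs1 : (∑ c : K, ∑ v ∈ A, ψ (c * ∑ i, v i ^ s)) = q * (Qf.card : ℂ) := by
      rw [Finset.sum_comm]
      calc ∑ v ∈ A, ∑ c : K, ψ (c * ∑ i, v i ^ s)
          = ∑ v ∈ A, (if (∑ i, v i ^ s) = 0 then q else 0) := by
            refine Finset.sum_congr rfl fun v _ => ?_
            rw [← hS (∑ i, v i ^ s)]
            exact Finset.sum_congr rfl fun c _ => by rw [mul_comm]
        _ = ∑ v ∈ A.filter (fun v => (∑ i, v i ^ s) = 0), q := (Finset.sum_filter _ _).symm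
        _ = q * (Qf.card : ℂ) := by
            rw [Finset.sum_const, nsmul_eq_mul, mul_comm]
            congr 2
            rw [hQdef, hAdef, Finset.filter_filter]
    have lhs2 : (∑ c : K, ∑ v ∈ A, ψ (c * ∑ i, v i ^ s)) = (A.card : ℂ) + (q - 1) * T := by
      rw [← Finset.add_sum_erase _ _ (Finset.mem_univ (0 : K))]
      congr 1
      · calc ∑ v ∈ A, ψ ((0 : K) * ∑ i, v i ^ s)
            = ∑ v ∈ A, 1 := by
              refine Finset.sum_congr rfl fun v _ => ?_
              rw [zero_mul, hψ0]
          _ = (A.card : ℂ) := by rw [Finset.sum_const, nsmul_eq_mul, mul_one]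
      · calc ∑ c ∈ Finset.univ.erase (0 : K), ∑ v ∈ A, ψ (c * ∑ i, v i ^ s)
            = ∑ c ∈ Finset.univ.erase (0 : K), T := by
              refine Finset.sum_congr rfl fun c hc => ?_
              exact hscale c (Finset.mem_erase.mp hc).1
          _ = (q - 1) * T := by
              rw [Finset.sum_const, nsmul_eq_mul]
              congr 1
              rw [Finset.card_erase_of_mem (Finset.mem_univ _), Finset.card_univ, hcard,
                Nat.cast_sub h2le.le, hqdef]
              push_cast
              ring
    rw [← lhs1, lhs2]
  -- identify the set cardinality
  have hncard : (({v : Fin k → K | ∑ i, t i * v i = 0 ∧ ∑ i, v i ^ s = 0}.ncard : ℂ))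
      = (Qf.card : ℂ) := by
    congr 1
    rw [Set.ncard_eq_toFinset_card', Set.toFinset_setOf]
  -- conclude
  rw [hLHS, hncard, eq_div_iff hq1]
  linear_combination (-q) * hQ - hA
end

section
/- With notation as in the context, for any k ∈ Z₊, t ∈ (K^×)^k, and a ∈ K^×, one has Q^t_{a,0} = Q^t_{0,a} = (q^{k−1} − Q^t_{0,0})/(q−1). -/
open Finset

lemma aux_pow_bij (K : Type*) [Field K] [Fintype K] (q s : ℕ)
    (hq : Fintype.card K = q) (hs : 0 < s) (hgcd : Nat.Coprime s (q - 1)) :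
    Function.Bijective (fun x : K => x ^ s) := by
  rw [← Finite.injective_iff_bijective]
  intro x y hxy
  simp only at hxy
  by_cases hy : y = 0
  · subst hy
    rw [zero_pow hs.ne'] at hxy
    exact pow_eq_zero_iff hs.ne' |>.mp hxy
  by_cases hx : x = 0
  · subst hx
    rw [zero_pow hs.ne'] at hxy
    exact absurd (pow_eq_zero_iff hs.ne' |>.mp hxy.symm) hy
  have h1 : (x / y) ^ s = 1 := by
    rw [div_pow, hxy, div_self (pow_ne_zero _ hy)]
  have h2 : (x / y) ^ (q - 1) = 1 := by
    rw [← hq]; exact FiniteField.pow_card_sub_one_eq_one _ (div_ne_zero hx hy)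
  have hdvd := Nat.dvd_gcd (orderOf_dvd_of_pow_eq_one h1) (orderOf_dvd_of_pow_eq_one h2)
  rw [hgcd] at hdvd
  have h3 : x / y = 1 := orderOf_eq_one_iff.mp (Nat.dvd_one.mp hdvd)
  exact (div_eq_one_iff_eq hy).mp h3

lemma aux_fiber (K : Type*) [Field K] [Fintype K] [DecidableEq K] (q k : ℕ)
    (hq : Fintype.card K = q) (hk : 0 < k) (t : Fin k → K) (ht : ∀ i, t i ≠ 0) (a : K) :
    (Finset.univ.filter (fun v : Fin k → K => ∑ i, t i * v i = a)).card = q ^ (k - 1) := by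
  set i₀ : Fin k := ⟨0, hk⟩ with hi₀
  have key : ∀ (v : Fin k → K) (x : K),
      ∑ i, t i * Function.update v i₀ x i = ∑ i, t i * v i - t i₀ * v i₀ + t i₀ * x := by
    intro v x
    have heq : (fun i => t i * Function.update v i₀ x i)
        = Function.update (fun i => t i * v i) i₀ (t i₀ * x) := by
      ext i
      rcases eq_or_ne i i₀ with h | h
      · subst h; simp
      · simp [Function.update_of_ne h]
    rw [heq, Finset.sum_update_of_mem (Finset.mem_univ _)]
    have : ∑ i ∈ Finset.univ \ {i₀}, t i * v i = (∑ i, t i * v i) - t i₀ * v i₀ := by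
      rw [Finset.sum_sdiff_eq_sub (Finset.subset_univ _)]
      simp
    rw [this]; ring
  have hupd : ∀ (v : Fin k → K) (c : K),
      Function.update (Function.update v i₀ (v i₀ + c)) i₀
        (Function.update v i₀ (v i₀ + c) i₀ + (-c)) = v := by
    intro v c
    rw [Function.update_idem, Function.update_self]
    have : v i₀ + c + -c = v i₀ := by ring
    rw [this, Function.update_eq_self]
  -- all fibers have equal cardinality
  have hconst : ∀ b : K,
      (Finset.univ.filter (fun v : Fin k → K => ∑ i, t i * v i = b)).card
        = (Finset.univ.filter (fun v : Fin k → K => ∑ i, t i * v i = (0:K))).card := by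
    intro b
    apply Finset.card_bij' (fun v _ => Function.update v i₀ (v i₀ + (-b) / t i₀))
      (fun w _ => Function.update w i₀ (w i₀ + b / t i₀))
    · intro v hv
      have h := hupd v ((-b) / t i₀)
      simp only [neg_div, neg_neg] at h ⊢; exact h
    · intro w hw
      have h := hupd w (b / t i₀)
      simp only [neg_div] at h ⊢; exact h
    · intro v hv
      simp only [Finset.mem_filter, Finset.mem_univ, true_and] at hv ⊢
      rw [key, hv]
      field_simp [ht i₀]
      ring
    · intro w hw
      simp only [Finset.mem_filter, Finset.mem_univ, true_and] at hw ⊢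
      rw [key, hw]
      field_simp [ht i₀]
      ring
  have hsum : (Finset.univ : Finset (Fin k → K)).card
      = ∑ b : K, (Finset.univ.filter (fun v : Fin k → K => ∑ i, t i * v i = b)).card :=
    Finset.card_eq_sum_card_fiberwise (fun v _ => Finset.mem_univ _)
  have hcardK : (0:ℕ) < q := hq ▸ Fintype.card_pos
  have h1 : (Finset.univ : Finset (Fin k → K)).card = q ^ k := by
    simp [Finset.card_univ, hq]
  have hqk : q * (Finset.univ.filter (fun v : Fin k → K => ∑ i, t i * v i = (0:K))).card
      = q ^ k := by
    rw [← h1, hsum]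
    rw [Finset.sum_congr rfl (fun b _ => hconst b), Finset.sum_const, Finset.card_univ, hq,
      smul_eq_mul]
  have hqk2 : q ^ k = q * q ^ (k - 1) := by
    rw [← pow_succ', Nat.sub_add_cancel hk]
  rw [hconst a]
  exact Nat.eq_of_mul_eq_mul_left hcardK (hqk.trans hqk2)

/-- For `a ∈ K^×`, `Q^t_{a,0} = Q^t_{0,a} = (q^{k-1} − Q^t_{0,0})/(q−1)`. -/
theorem stmt_9 (K : Type*) [Field K] [Fintype K] (q s k : ℕ)
    (hq : Fintype.card K = q) (hs : 0 < s) (hgcd : Nat.Coprime s (q - 1))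
    (hk : 0 < k) (t : Fin k → K) (ht : ∀ i, t i ≠ 0)
    (Q : K → K → ℕ)
    (hQ : ∀ a c, Q a c =
      {v : Fin k → K | ∑ i, t i * v i = a ∧ ∑ i, v i ^ s = c ^ s}.ncard)
    (a : K) (ha : a ≠ 0) :
    Q a 0 = Q 0 a ∧
      (Q a 0 : ℚ) = ((q : ℚ) ^ (k - 1) - (Q 0 0 : ℚ)) / ((q : ℚ) - 1) := by
  classical
  have hbij := aux_pow_bij K q s hq hs hgcd
  set N : K → K → ℕ := fun b c =>
    (Finset.univ.filter fun v : Fin k → K =>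
      (∑ i, t i * v i = b ∧ ∑ i, v i ^ s = c ^ s)).card with hN
  have hQN : ∀ b c, Q b c = N b c := by
    intro b c
    rw [hQ]
    show _ = (Finset.univ.filter fun v : Fin k → K =>
      (∑ i, t i * v i = b ∧ ∑ i, v i ^ s = c ^ s)).card
    rw [← Set.ncard_coe_finset]
    congr 1
    ext v
    simp
  -- scaling
  have hscale : ∀ u : K, u ≠ 0 → ∀ b c, N b c = N (u * b) (u * c) := by
    intro u hu b c
    show (Finset.univ.filter fun v : Fin k → K =>
        (∑ i, t i * v i = b ∧ ∑ i, v i ^ s = c ^ s)).card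
      = (Finset.univ.filter fun v : Fin k → K =>
        (∑ i, t i * v i = u * b ∧ ∑ i, v i ^ s = (u * c) ^ s)).card
    refine Finset.card_bij' (fun v _ => fun i => u * v i) (fun w _ => fun i => u⁻¹ * w i)
      ?_ ?_ ?_ ?_
    · intro v hv
      simp only [Finset.mem_filter, Finset.mem_univ, true_and] at hv ⊢
      obtain ⟨h1, h2⟩ := hv
      constructor
      · rw [← h1, Finset.mul_sum]
        exact Finset.sum_congr rfl fun i _ => by ring
      · have heq : ∀ i, (u * v i) ^ s = u ^ s * v i ^ s := fun i => mul_pow u (v i) s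
        simp only [heq, ← Finset.mul_sum, h2, mul_pow]
    · intro w hw
      simp only [Finset.mem_filter, Finset.mem_univ, true_and] at hw ⊢
      obtain ⟨h1, h2⟩ := hw
      constructor
      · have heq : ∑ i, t i * (u⁻¹ * w i) = u⁻¹ * ∑ i, t i * w i := by
          rw [Finset.mul_sum]
          exact Finset.sum_congr rfl fun i _ => by ring
        rw [heq, h1]
        field_simp
      · have heq : ∀ i, (u⁻¹ * w i) ^ s = u⁻¹ ^ s * w i ^ s := fun i => mul_pow u⁻¹ (w i) s
        simp only [heq, ← Finset.mul_sum, h2, mul_pow]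
        field_simp
        rw [← mul_pow, one_div, inv_mul_cancel₀ hu, one_pow, one_mul]
    · intro v hv
      ext i
      field_simp
    · intro w hw
      ext i
      field_simp
  have hq1 : 1 < q := hq ▸ Fintype.one_lt_card
  have hq0 : (0:ℕ) < q - 1 := by omega
  -- the set {∑ vᵢ^s = 0} has q^(k-1) elements
  have hE : (Finset.univ.filter fun v : Fin k → K => ∑ i, v i ^ s = 0).card = q ^ (k - 1) := by
    rw [← aux_fiber K q k hq hk (fun _ => (1:K)) (fun _ => one_ne_zero) 0]
    refine Finset.card_bij' (fun v _ => fun i => v i ^ s)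
      (fun w _ => fun i => (Equiv.ofBijective _ hbij).symm (w i)) ?_ ?_ ?_ ?_
    · intro v hv
      simp only [Finset.mem_filter, Finset.mem_univ, true_and, one_mul] at hv ⊢
      exact hv
    · intro w hw
      simp only [Finset.mem_filter, Finset.mem_univ, true_and, one_mul] at hw ⊢
      have heq : ∀ i, ((Equiv.ofBijective _ hbij).symm (w i)) ^ s = w i := fun i =>
        (Equiv.ofBijective _ hbij).apply_symm_apply (w i)
      simp only [heq, hw]
    · intro v hv
      ext i
      exact (Equiv.ofBijective _ hbij).symm_apply_apply (v i)
    · intro w hw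
      ext i
      exact (Equiv.ofBijective _ hbij).apply_symm_apply (w i)
  have hsplit : ∀ f : K → ℕ, (∀ b : K, b ≠ 0 → f b = f 1) →
      ∑ b : K, f b = f 0 + (q - 1) * f 1 := by
    intro f hf
    rw [← Finset.sum_erase_add Finset.univ f (Finset.mem_univ 0)]
    rw [Finset.sum_congr rfl (fun b hb => hf b (Finset.ne_of_mem_erase hb))]
    rw [Finset.sum_const, smul_eq_mul, Finset.card_erase_of_mem (Finset.mem_univ 0),
      Finset.card_univ, hq]
    ring
  have heq1 : q ^ (k - 1) = N 0 0 + (q - 1) * N 1 0 := by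
    rw [← hE]
    have hfib : (Finset.univ.filter fun v : Fin k → K => ∑ i, v i ^ s = 0).card
        = ∑ b : K, N b 0 := by
      rw [Finset.card_eq_sum_card_fiberwise
        (f := fun v : Fin k → K => ∑ i, t i * v i) (t := Finset.univ)
        (fun v _ => Finset.mem_univ _)]
      refine Finset.sum_congr rfl fun b _ => ?_
      show _ = (Finset.univ.filter fun v : Fin k → K =>
        (∑ i, t i * v i = b ∧ ∑ i, v i ^ s = (0:K) ^ s)).card
      rw [Finset.filter_filter]
      congr 1
      ext v
      simp [zero_pow hs.ne', and_comm]
    rw [hfib]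
    apply hsplit
    intro b hb
    rw [hscale b⁻¹ (inv_ne_zero hb) b 0]
    simp [inv_mul_cancel₀ hb]
  -- fibering the hyperplane {∑ tᵢvᵢ = 0} by the power sum
  have heq2 : q ^ (k - 1) = N 0 0 + (q - 1) * N 0 1 := by
    rw [← aux_fiber K q k hq hk t ht 0]
    have hfib : (Finset.univ.filter fun v : Fin k → K => ∑ i, t i * v i = 0).card
        = ∑ c : K, (Finset.univ.filter fun v : Fin k → K =>
            (∑ i, t i * v i = 0 ∧ ∑ i, v i ^ s = c)).card := by
      rw [Finset.card_eq_sum_card_fiberwise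
        (f := fun v : Fin k → K => ∑ i, v i ^ s) (t := Finset.univ)
        (fun v _ => Finset.mem_univ _)]
      refine Finset.sum_congr rfl fun c _ => ?_
      rw [Finset.filter_filter]
    have hre : ∑ b : K, N 0 b = ∑ c : K, (Finset.univ.filter fun v : Fin k → K =>
        (∑ i, t i * v i = 0 ∧ ∑ i, v i ^ s = c)).card :=
      Fintype.sum_bijective _ hbij _ _ (fun b => rfl)
    rw [hfib, ← hre]
    apply hsplit
    intro b hb
    rw [hscale b⁻¹ (inv_ne_zero hb) 0 b]
    simp [inv_mul_cancel₀ hb]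
  have hNa0 : N a 0 = N 1 0 := by
    rw [hscale a⁻¹ (inv_ne_zero ha) a 0]
    simp [inv_mul_cancel₀ ha]
  have hN0a : N 0 a = N 0 1 := by
    rw [hscale a⁻¹ (inv_ne_zero ha) 0 a]
    simp [inv_mul_cancel₀ ha]
  have hkey : N 1 0 = N 0 1 := by
    have h := heq1.symm.trans heq2
    exact Nat.eq_of_mul_eq_mul_left hq0 (Nat.add_left_cancel h)
  constructor
  · rw [hQN a 0, hQN 0 a, hNa0, hN0a, hkey]
  · rw [hQN a 0, hQN 0 0, hNa0]
    have hcast : ((q:ℚ) ^ (k - 1)) = (N 0 0 : ℚ) + ((q:ℚ) - 1) * (N 1 0 : ℚ) := by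
      have h := congrArg (fun n : ℕ => (n : ℚ)) heq1
      push_cast [Nat.cast_sub hq1.le] at h
      linarith [h]
    have hne : (q:ℚ) - 1 ≠ 0 := by
      have h2 : (1:ℚ) < (q:ℚ) := by exact_mod_cast hq1
      linarith
    field_simp
    linarith [hcast]
end

section
/- With notation as in the context, for any k ∈ Z₊, scalars b, t₁, …, t_k ∈ K^×, and a ∈ K, one has Q^{(t₁,…,t_k)}_{a,b} = (Q^{(a/b,t₁,…,t_k)}_{0,0} − Q^{(t₁,…,t_k)}_{0,0})/(q−1). -/
lemma aux_key (K : Type*) [Field K] [Fintype K] (s k : ℕ) (hs : 0 < s)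
    (hneg : (-1 : K) ^ s = -1) (t : Fin k → K) (a b : K) (hb : b ≠ 0) :
    Nat.card {w : Fin (k+1) → K //
        ∑ i, (Fin.cons (a / b) t : Fin (k+1) → K) i * w i = 0 ∧ ∑ i, w i ^ s = 0}
      = Nat.card {v : Fin k → K // ∑ i, t i * v i = 0 ∧ ∑ i, v i ^ s = 0}
        + Nat.card {c : K // c ≠ 0} *
          Nat.card {v : Fin k → K // ∑ i, t i * v i = a ∧ ∑ i, v i ^ s = b ^ s} := by
  classical
  have negpow : ∀ x : K, (-x) ^ s = -(x ^ s) := fun x => by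
    rw [neg_eq_neg_one_mul, mul_pow, hneg, neg_one_mul]
  have e : {w : Fin (k+1) → K //
        ∑ i, (Fin.cons (a / b) t : Fin (k+1) → K) i * w i = 0 ∧ ∑ i, w i ^ s = 0}
      ≃ {v : Fin k → K // ∑ i, t i * v i = 0 ∧ ∑ i, v i ^ s = 0}
        ⊕ ({c : K // c ≠ 0} ×
          {v : Fin k → K // ∑ i, t i * v i = a ∧ ∑ i, v i ^ s = b ^ s}) := by
    refine
      { toFun := fun w =>
          if h : w.1 0 = 0 then
            Sum.inl ⟨Fin.tail w.1, ?_, ?_⟩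
          else
            Sum.inr ⟨⟨w.1 0, h⟩, ⟨fun i => w.1 i.succ * (-b / w.1 0), ?_, ?_⟩⟩
        invFun := fun x =>
          match x with
          | Sum.inl ⟨v, hv⟩ => ⟨Fin.cons 0 v, ?_, ?_⟩
          | Sum.inr ⟨⟨c, hc⟩, ⟨v, hv⟩⟩ => ⟨Fin.cons c (fun i => v i * (-c / b)), ?_, ?_⟩
        left_inv := ?_
        right_inv := ?_ }
    · -- tail sum linear, case w0 = 0
      have h1 := w.2.1
      rw [Fin.sum_univ_succ] at h1
      simpa [Fin.tail, h, Fin.cons_succ] using h1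
    · have h2 := w.2.2
      rw [Fin.sum_univ_succ] at h2
      simpa [Fin.tail, h, zero_pow hs.ne'] using h2
    · -- case w0 ≠ 0, linear condition
      have h1 := w.2.1
      rw [Fin.sum_univ_succ] at h1
      simp only [Fin.cons_zero, Fin.cons_succ] at h1
      simp_rw [← mul_assoc]
      rw [← Finset.sum_mul]
      have hsum : ∑ i, t i * w.1 i.succ = -(a / b * w.1 0) := by linear_combination h1
      rw [hsum]
      field_simp
    · have h2 := w.2.2
      rw [Fin.sum_univ_succ] at h2
      simp_rw [mul_pow]
      rw [← Finset.sum_mul]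
      have hsum : ∑ i : Fin k, w.1 i.succ ^ s = -(w.1 0 ^ s) := by linear_combination h2
      rw [hsum, neg_div, negpow, div_pow]
      field_simp
    · -- invFun inl, linear
      rw [Fin.sum_univ_succ]
      simpa [Fin.cons_succ] using hv.1
    · rw [Fin.sum_univ_succ]
      simpa [zero_pow hs.ne', Fin.cons_succ] using hv.2
    · -- invFun inr, linear
      rw [Fin.sum_univ_succ]
      simp only [Fin.cons_zero, Fin.cons_succ]
      simp_rw [← mul_assoc]
      rw [← Finset.sum_mul, hv.1]
      field_simp
      ring
    · rw [Fin.sum_univ_succ]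
      simp only [Fin.cons_zero, Fin.cons_succ]
      simp_rw [mul_pow]
      rw [← Finset.sum_mul, hv.2, neg_div, negpow, div_pow]
      field_simp
      ring
    · rintro ⟨w, hw⟩
      by_cases h : w 0 = 0
      · simp only [dif_pos h]
        apply Subtype.ext
        simp only
        rw [← h, Fin.cons_self_tail]
      · simp only [dif_neg h]
        apply Subtype.ext
        simp only
        funext i
        refine Fin.cases ?_ (fun j => ?_) i
        · simp
        · simp only [Fin.cons_succ]
          field_simp
    · rintro (⟨v, hv⟩ | ⟨⟨c, hc⟩, ⟨v, hv⟩⟩)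
      · dsimp only
        rw [dif_pos (Fin.cons_zero _ _)]
        congr 1
      · dsimp only
        rw [dif_neg (show (Fin.cons c (fun i => v i * (-c / b)) : Fin (k+1) → K) 0 ≠ 0 by simpa using hc)]
        congr 1
        refine Prod.ext (Subtype.ext (by simp)) ?_
        apply Subtype.ext
        funext i
        simp only [Fin.cons_succ, Fin.cons_zero]
        field_simp
  rw [Nat.card_congr e, Nat.card_sum, Nat.card_prod]

lemma aux_neg_one_pow (K : Type*) [Field K] [Fintype K] [DecidableEq K] (q s : ℕ)
    (hq : Fintype.card K = q) (hgcd : Nat.Coprime s (q - 1)) :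
    (-1 : K) ^ s = -1 := by
  by_cases h : (-1 : K) = 1
  · rw [h, one_pow]
  · have hu : (-1 : Kˣ) ≠ 1 := by
      intro hc
      apply h
      have := congrArg (Units.val) hc
      simpa using this
    have ho : orderOf (-1 : Kˣ) = 2 := orderOf_eq_prime (by simp) hu
    have h2 : 2 ∣ q - 1 := by
      have := orderOf_dvd_card (x := (-1 : Kˣ))
      rwa [ho, Fintype.card_units, hq] at this
    have hodd : Odd s := by
      rcases Nat.even_or_odd s with he | ho2
      · exfalso
        have : 2 ∣ Nat.gcd s (q - 1) := Nat.dvd_gcd he.two_dvd h2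
        rw [hgcd] at this
        omega
      · exact ho2
    exact hodd.neg_one_pow


/-- For `b, t₁, …, t_k ∈ K^×` and `a ∈ K`,
`Q^{(t₁,…,t_k)}_{a,b} = (Q^{(a/b,t₁,…,t_k)}_{0,0} − Q^{(t₁,…,t_k)}_{0,0})/(q−1)`. -/
theorem stmt_10 (K : Type*) [Field K] [Fintype K] (q s k : ℕ)
    (hq : Fintype.card K = q) (hs : 0 < s) (hgcd : Nat.Coprime s (q - 1))
    (hk : 0 < k) (t : Fin k → K) (ht : ∀ i, t i ≠ 0)
    (a b : K) (hb : b ≠ 0) :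
    ({v : Fin k → K | ∑ i, t i * v i = a ∧ ∑ i, v i ^ s = b ^ s}.ncard : ℚ) =
      (({v : Fin (k + 1) → K |
            ∑ i, (Fin.cons (a / b) t : Fin (k + 1) → K) i * v i = 0 ∧ ∑ i, v i ^ s = 0}.ncard : ℚ)
        - ({v : Fin k → K | ∑ i, t i * v i = 0 ∧ ∑ i, v i ^ s = 0}.ncard : ℚ))
        / ((q : ℚ) - 1) := by
  classical
  have hneg : (-1 : K) ^ s = -1 := aux_neg_one_pow K q s hq hgcd
  have key := aux_key K s k hs hneg t a b hb
  have hcnz : Nat.card {c : K // c ≠ 0} = q - 1 := by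
    rw [Nat.card_congr (unitsEquivNeZero (G₀ := K)).symm, Nat.card_eq_fintype_card,
      Fintype.card_units, hq]
  rw [hcnz] at key
  have hq2 : 2 ≤ q := by
    rw [← hq]; exact Fintype.one_lt_card
  have hA : ({v : Fin k → K | ∑ i, t i * v i = a ∧ ∑ i, v i ^ s = b ^ s}.ncard)
      = Nat.card {v : Fin k → K // ∑ i, t i * v i = a ∧ ∑ i, v i ^ s = b ^ s} :=
    (Nat.card_coe_set_eq _).symm
  have hB : ({v : Fin (k + 1) → K |
        ∑ i, (Fin.cons (a / b) t : Fin (k + 1) → K) i * v i = 0 ∧ ∑ i, v i ^ s = 0}.ncard)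
      = Nat.card {w : Fin (k+1) → K //
        ∑ i, (Fin.cons (a / b) t : Fin (k+1) → K) i * w i = 0 ∧ ∑ i, w i ^ s = 0} :=
    (Nat.card_coe_set_eq _).symm
  have hC : ({v : Fin k → K | ∑ i, t i * v i = 0 ∧ ∑ i, v i ^ s = 0}.ncard)
      = Nat.card {v : Fin k → K // ∑ i, t i * v i = 0 ∧ ∑ i, v i ^ s = 0} :=
    (Nat.card_coe_set_eq _).symm
  rw [hA, hB, hC, key]
  have hqQ : ((q : ℚ) - 1) ≠ 0 := by
    have : (2 : ℚ) ≤ (q : ℚ) := by exact_mod_cast hq2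
    linarith
  field_simp
  rw [Nat.cast_add, Nat.cast_mul, Nat.cast_sub (by omega : 1 ≤ q), Nat.cast_one]
  ring
end

section
/- Let K be a finite field of odd characteristic with s coprime to |K|−1. Then Q^{(1,−1)}_{1,1} − 1 = Q^{(1,1)}_{1,−1}; that is, the number of (x₁,x₂) ∈ K² with x₁ − x₂ = 1 and x₁^s + x₂^s = 1, minus one, equals the number of (x₁,x₂) ∈ K² with x₁ + x₂ = 1 and x₁^s + x₂^s = −1. -/
/-- In odd characteristic, `Q^{(1,−1)}_{1,1} − 1 = Q^{(1,1)}_{1,−1}`. -/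
theorem stmt_13 (K : Type*) [Field K] [Fintype K] (p q s : ℕ) (hp : p.Prime)
    [CharP K p] (hodd : Odd p)
    (hq : Fintype.card K = q) (hs : 0 < s) (hgcd : Nat.Coprime s (q - 1)) :
    ({v : K × K | v.1 - v.2 = 1 ∧ v.1 ^ s + v.2 ^ s = 1}.ncard : ℤ) - 1 =
      ({v : K × K | v.1 + v.2 = 1 ∧ v.1 ^ s + v.2 ^ s = -1}.ncard : ℤ) := by
  -- s is odd since q - 1 is even
  obtain ⟨n, hn⟩ := FiniteField.card K p
  have hqodd : Odd q := by rw [← hq, hn.2]; exact hodd.pow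
  have h2 : 2 ∣ q - 1 := (Nat.Odd.sub_odd hqodd odd_one).two_dvd
  have hsodd : Odd s := by
    rw [Nat.odd_iff, ← Nat.two_dvd_ne_zero]
    intro h2s
    have := Nat.dvd_gcd h2s h2
    rw [hgcd] at this
    omega
  have hneg : ∀ x : K, (-x) ^ s = -(x ^ s) := fun x => hsodd.neg_pow x
  have hchar2 : (1 : K) ≠ -1 := by
    intro h
    have h20 : ((2 : ℕ) : K) = 0 := by push_cast; linear_combination h
    rw [CharP.cast_eq_zero_iff K p] at h20
    have := (Nat.prime_dvd_prime_iff_eq hp Nat.prime_two).mp h20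
    rw [Nat.odd_iff] at hodd
    omega
  set A : Set (K × K) := {v : K × K | v.1 - v.2 = 1 ∧ v.1 ^ s + v.2 ^ s = 1} with hA
  set B : Set (K × K) := {v : K × K | v.1 + v.2 = 1 ∧ v.1 ^ s + v.2 ^ s = -1} with hB
  have hmem : ((1 : K), (0 : K)) ∈ A := by
    constructor
    · simp
    · simp [zero_pow hs.ne']
  have hne0 : ∀ v : K × K, v ∈ A \ {((1 : K), (0 : K))} → v.2 ≠ 0 := by
    rintro ⟨x, y⟩ ⟨⟨h1, h2v⟩, hne⟩ hy0
    apply hne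
    simp only at hy0
    subst hy0
    simp only [sub_zero] at h1
    simp [Prod.ext_iff, h1]
  set f : K × K → K × K := fun v => (v.1 / v.2, -1 / v.2) with hf
  have hinj : Set.InjOn f (A \ {((1 : K), (0 : K))}) := by
    rintro ⟨x₁, y₁⟩ hm1 ⟨x₂, y₂⟩ hm2 heq
    have hy1 : y₁ ≠ 0 := hne0 _ hm1
    have hy2 : y₂ ≠ 0 := hne0 _ hm2
    simp only [hf, Prod.ext_iff] at heq ⊢
    obtain ⟨e1, e2⟩ := heq
    have hy : y₁ = y₂ := by field_simp at e2; exact (neg_inj.mp e2).symm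
    subst hy
    refine ⟨?_, rfl⟩
    field_simp at e1
    exact e1
  have himg : f '' (A \ {((1 : K), (0 : K))}) = B := by
    ext ⟨u, w⟩
    constructor
    · rintro ⟨⟨x, y⟩, hm, heq⟩
      have hy : y ≠ 0 := hne0 _ hm
      obtain ⟨⟨h1, h2v⟩, -⟩ := hm
      simp only [Set.mem_setOf_eq] at h1 h2v
      simp only [hf, Prod.ext_iff] at heq
      obtain ⟨e1, e2⟩ := heq
      simp only [hB, Set.mem_setOf_eq]
      rw [← e1, ← e2]
      have hys : y ^ s ≠ 0 := pow_ne_zero _ hy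
      constructor
      · field_simp
        linear_combination h1
      · rw [div_pow, div_pow, hneg 1, one_pow]
        field_simp
        linear_combination h2v
    · rintro ⟨hb1, hb2⟩
      simp only [Set.mem_setOf_eq] at hb1 hb2
      have hw : w ≠ 0 := by
        intro h0
        subst h0
        simp only [add_zero] at hb1
        rw [zero_pow hs.ne', add_zero, hb1, one_pow] at hb2
        exact hchar2 hb2
      have hws : w ^ s ≠ 0 := pow_ne_zero _ hw
      refine ⟨(-u / w, -1 / w), ⟨⟨?_, ?_⟩, ?_⟩, ?_⟩
      · simp only [hA, Set.mem_setOf_eq]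
        field_simp
        linear_combination (-1 : K) * hb1
      · simp only [hA, Set.mem_setOf_eq]
        rw [div_pow, div_pow, hneg u, hneg 1, one_pow]
        field_simp
        linear_combination (-1 : K) * hb2
      · intro hmem'
        rw [Set.mem_singleton_iff, Prod.ext_iff] at hmem'
        have h0 := hmem'.2
        simp only at h0
        apply hw
        field_simp at h0
        simp at h0
      · simp only [hf, Prod.ext_iff]
        constructor
        · field_simp
        · field_simp
  have hcount : (A \ {((1 : K), (0 : K))}).ncard + 1 = A.ncard :=
    Set.ncard_diff_singleton_add_one hmem (Set.toFinite A)
  have hcount2 : (A \ {((1 : K), (0 : K))}).ncard = B.ncard := by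
    rw [← himg, Set.ncard_image_of_injOn hinj]
  rw [← hcount, hcount2]
  push_cast
  ring
end

section
/- Let K be a finite field of order q with s coprime to q−1, and w ∈ K. The count Q^{(1,1)}_{1,w} of pairs (x₁,x₂) ∈ K² with x₁ + x₂ = 1 and x₁^s + x₂^s = w^s is odd if and only if the characteristic p of K is odd and w = 2^{1/s − 1} (where 1/s is the inverse of s mod q−1). -/
/-- A finset with a fixed-point-free involution has even cardinality. -/
lemma even_card_of_involution {α : Type*} (S : Finset α) (g : α → α)
    (hmem : ∀ a ∈ S, g a ∈ S) (hne : ∀ a ∈ S, g a ≠ a) (hgg : ∀ a ∈ S, g (g a) = a) :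
    Even S.card := by
  have h : (S.card : ZMod 2) = 0 := by
    have : ∑ _x ∈ S, (1 : ZMod 2) = 0 :=
      Finset.sum_involution (fun a _ => g a)
        (by intro a ha; decide)
        (fun a ha _ => hne a ha)
        (fun a ha => hmem a ha)
        (fun a ha => hgg a ha)
    simpa using this
  have : (2 : ℕ) ∣ S.card := by
    exact_mod_cast (ZMod.natCast_eq_zero_iff S.card 2).mp h
  exact even_iff_two_dvd.mpr this

/-- The count `Q^{(1,1)}_{1,w}` of pairs `(x₁,x₂) ∈ K²` with `x₁ + x₂ = 1` and
`x₁^s + x₂^s = w^s` is odd iff the characteristic `p` is odd and `w = 2^{1/s − 1}`,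
where `1/s` is the multiplicative inverse of `s` modulo `q − 1`. -/
theorem stmt_14 (K : Type*) [Field K] [Fintype K] (p n q s : ℕ) (hp : p.Prime)
    [CharP K p] (hn : 0 < n) (hq : Fintype.card K = q) (hqpn : q = p ^ n)
    (hs : 0 < s) (hgcd : Nat.Coprime s (q - 1))
    (s' : ℕ) (hs' : 1 ≤ s') (hinv : s * s' ≡ 1 [MOD q - 1]) (w : K) :
    Odd ({v : K × K | v.1 + v.2 = 1 ∧ v.1 ^ s + v.2 ^ s = w ^ s}.ncard) ↔
      (Odd p ∧ w = (2 : K) ^ (s' - 1)) := by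
  classical
  -- key: x ^ (s * s') = x for all x
  have hss1 : 1 ≤ s * s' := Nat.one_le_iff_ne_zero.mpr (by positivity)
  have hdvd : (q - 1) ∣ s * s' - 1 := (Nat.modEq_iff_dvd' hss1).mp hinv.symm
  obtain ⟨k, hk⟩ := hdvd
  have hss : s * s' = 1 + (q - 1) * k := by omega
  have key : ∀ x : K, x ^ (s * s') = x := by
    intro x
    rcases eq_or_ne x 0 with rfl | hx
    · rw [zero_pow (by positivity)]
    · rw [hss, pow_add, pow_mul, pow_one, ← hq,
        FiniteField.pow_card_sub_one_eq_one x hx, one_pow, mul_one]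
  have hinj : Function.Injective (fun x : K => x ^ s) := by
    intro x y hxy
    have h2 : (x ^ s) ^ s' = (y ^ s) ^ s' := by simp only at hxy; rw [hxy]
    rwa [← pow_mul, ← pow_mul, key, key] at h2
  -- translate to a finset of K
  set T : Finset K := Finset.univ.filter (fun x => x ^ s + (1 - x) ^ s = w ^ s) with hT
  have hmemT : ∀ x : K, x ∈ T ↔ x ^ s + (1 - x) ^ s = w ^ s := by
    intro x; simp [hT]
  have hsetcard :
      ({v : K × K | v.1 + v.2 = 1 ∧ v.1 ^ s + v.2 ^ s = w ^ s}.ncard) = T.card := by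
    have himg : {v : K × K | v.1 + v.2 = 1 ∧ v.1 ^ s + v.2 ^ s = w ^ s} =
        (fun x : K => (x, 1 - x)) '' (T : Set K) := by
      ext ⟨a, b⟩
      constructor
      · rintro ⟨h1, h2⟩
        refine ⟨a, ?_, ?_⟩
        · rw [Finset.mem_coe, hmemT]
          have hb : b = 1 - a := by linear_combination h1
          rw [← hb]; exact h2
        · have hb : b = 1 - a := by linear_combination h1
          rw [hb]
      · rintro ⟨x, hx, h⟩
        rw [Finset.mem_coe, hmemT] at hx
        have h1 : x = a := congrArg Prod.fst h
        have h2 : 1 - x = b := congrArg Prod.snd h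
        subst h1
        refine ⟨by linear_combination -h2, by rw [← h2]; exact hx⟩
    rw [himg, Set.ncard_image_of_injective _ ?_, Set.ncard_coe_finset]
    intro a b h
    exact congrArg Prod.fst h
  rw [hsetcard]
  -- the involution x ↦ 1 - x preserves T
  have hTinv : ∀ x ∈ T, 1 - x ∈ T := by
    intro x hx
    rw [hmemT] at hx ⊢
    rw [sub_sub_cancel]
    linear_combination hx
  by_cases hp2 : p = 2
  · -- char 2: count is even, RHS false
    subst hp2
    have heven : Even T.card := by
      apply even_card_of_involution T (fun x => 1 - x) hTinv
      · intro a _ h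
        have h2 : (2 : K) * a = 1 := by linear_combination -h
        have hz : (2 : K) = 0 := by
          have := CharP.cast_eq_zero K 2
          simpa using this
        rw [hz, zero_mul] at h2
        exact one_ne_zero h2.symm
      · intro a _; ring
    simp [Nat.not_odd_iff_even.mpr heven]
  · -- odd characteristic
    have hpodd : Odd p := hp.odd_of_ne_two hp2
    have h2ne : (2 : K) ≠ 0 := by
      intro h
      have hd := (CharP.cast_eq_zero_iff K p 2).mp (by exact_mod_cast h)
      exact hp2 ((Nat.prime_dvd_prime_iff_eq hp Nat.prime_two).mp hd)
    set c : K := 2⁻¹ with hc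
    have hcc : (1 : K) - c = c := by
      rw [hc]
      field_simp
      ring
    have hfix : ∀ x : K, (1 - x = x) ↔ x = c := by
      intro x
      constructor
      · intro h
        have h2 : (2 : K) * x = 1 := by linear_combination -h
        rw [hc]
        exact eq_inv_of_mul_eq_one_right (by linear_combination h2)
      · rintro rfl; exact hcc
    -- parity: Odd T.card ↔ c ∈ T
    have hparity : Odd T.card ↔ c ∈ T := by
      have heven : Even (T.erase c).card := by
        apply even_card_of_involution _ (fun x => 1 - x)
        · intro a ha
          rw [Finset.mem_erase] at ha ⊢
          refine ⟨?_, hTinv a ha.2⟩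
          intro h
          apply ha.1
          have h3 : a = 1 - c := by linear_combination -h
          rw [h3, hcc]
        · intro a ha h
          exact (Finset.mem_erase.mp ha).1 ((hfix a).mp h)
        · intro a _; ring
      by_cases hcT : c ∈ T
      · rw [← Finset.card_erase_add_one hcT, Nat.odd_add_one]
        exact iff_of_true (Nat.not_odd_iff_even.mpr heven) hcT
      · rw [Finset.erase_eq_of_notMem hcT] at heven
        exact iff_of_false (Nat.not_odd_iff_even.mpr heven) hcT
    rw [hparity, hmemT, hcc]
    -- c^s + c^s = w^s ↔ w = 2 ^ (s' - 1)
    have hcalc : c ^ s + c ^ s = ((2 : K) ^ (s' - 1)) ^ s := by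
      have h2s : (2 : K) ^ s ≠ 0 := pow_ne_zero _ h2ne
      apply mul_right_cancel₀ h2s
      have hone : c ^ s * 2 ^ s = 1 := by
        rw [← mul_pow, hc, inv_mul_cancel₀ h2ne, one_pow]
      have hl : (c ^ s + c ^ s) * 2 ^ s = 2 := by linear_combination 2 * hone
      rw [hl, ← pow_mul, ← pow_add]
      have he : (s' - 1) * s + s = s * s' := by
        cases' Nat.exists_eq_add_of_le hs' with m hm
        subst hm
        simp [Nat.add_sub_cancel_left]
        ring
      rw [he, key]
    constructor
    · intro h
      refine ⟨hpodd, hinj ?_⟩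
      simp only
      rw [← hcalc, h]
    · rintro ⟨-, rfl⟩
      rw [← hcalc]
end

section
/- Let K be a finite field of characteristic p and order q = p^n, and s an invertible exponent over K. The degree [Q(W_{K,s}):Q] of the field generated over Q by all the Weil sum values W_u (u ∈ K^×) equals (p−1)/gcd(p−1, s−1). Moreover, if p > 2 this common value m satisfies p ≡ 1 (mod 2m). -/
open IntermediateField Finset

/-- Powers of an element killed by `p` only depend on the exponent mod `p`. -/
private lemma aux_pow_mod {M : Type*} [Monoid M] (z : M) (p : ℕ) (hz : z ^ p = 1) (k : ℕ) :
    z ^ k = z ^ (k % p) := by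
  conv_lhs => rw [← Nat.div_add_mod k p]
  rw [pow_add, pow_mul, hz, one_pow, one_mul]

/-- An automorphism fixing a generating set fixes the adjoined field. -/
private lemma aux_fix_adjoin {F E : Type*} [Field F] [Field E] [Algebra F E] (S : Set E)
    (σ : E ≃ₐ[F] E) (h : ∀ x ∈ S, σ x = x) :
    ∀ x ∈ IntermediateField.adjoin F S, σ x = x := by
  intro x hx
  induction hx using IntermediateField.adjoin_induction with
  | mem x hx => exact h x hx
  | algebraMap x => exact σ.commutes x
  | add x y _ _ hx hy => rw [map_add, hx, hy]
  | inv x _ hx => rw [map_inv₀, hx]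
  | mul x y _ _ hx hy => rw [map_mul, hx, hy]

/-- The number of solutions of `a ^ d = 1` in `(ZMod p)ˣ` is `gcd (p-1) d`. -/
private lemma aux_card_pow_eq_one (p : ℕ) [Fact p.Prime] (d : ℕ) :
    Fintype.card {a : (ZMod p)ˣ // a ^ d = 1} = Nat.gcd (p - 1) d := by
  classical
  set N := p - 1 with hN
  have hp : p.Prime := Fact.out
  have hN0 : 0 < N := by have := hp.two_le; omega
  have hcardu : Fintype.card (ZMod p)ˣ = N := by
    rw [ZMod.card_units_eq_totient, Nat.totient_prime hp]
  set e := Nat.gcd N d with he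
  have he0 : 0 < e := Nat.gcd_pos_of_pos_left _ hN0
  haveI : NeZero e := ⟨he0.ne'⟩
  have hedvd : e ∣ N := Nat.gcd_dvd_left _ _
  -- a primitive e-th root of unity in ZMod p
  obtain ⟨gen, hgen⟩ := IsCyclic.exists_generator (α := (ZMod p)ˣ)
  have horder : orderOf gen = N := by
    rw [orderOf_eq_card_of_forall_mem_zpowers hgen, Nat.card_eq_fintype_card, hcardu]
  have hprimgen : IsPrimitiveRoot gen N := horder ▸ IsPrimitiveRoot.orderOf gen
  have hprime : IsPrimitiveRoot (gen ^ (N / e)) e :=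
    hprimgen.pow hN0 (Nat.div_mul_cancel hedvd).symm
  have hprimf : IsPrimitiveRoot ((gen ^ (N / e) : (ZMod p)ˣ) : ZMod p) e :=
    IsPrimitiveRoot.coe_units_iff.mpr hprime
  have hroots : Fintype.card (rootsOfUnity e (ZMod p)) = e := by
    rw [← Nat.card_eq_fintype_card]; exact hprimf.card_rootsOfUnity
  rw [← hroots]
  apply Fintype.card_congr
  apply Equiv.subtypeEquivRight
  intro a
  have hordN : orderOf a ∣ N := by rw [← hcardu]; exact orderOf_dvd_card
  rw [← orderOf_dvd_iff_pow_eq_one, mem_rootsOfUnity, ← orderOf_dvd_iff_pow_eq_one, he,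
    Nat.dvd_gcd_iff]
  exact ⟨fun h => ⟨hordN, h⟩, fun h => h.2⟩

set_option maxHeartbeats 4000000 in
set_option synthInstance.maxHeartbeats 1000000 in
/-- The degree over `ℚ` of the field generated by all Weil sum values equals
`(p−1)/gcd(p−1, s−1)`; moreover for `p > 2` this value `m` satisfies
`p ≡ 1 (mod 2m)`. -/
theorem stmt_16 (p n s : ℕ) (hp : p.Prime) (hn : 0 < n)
    (K : Type*) [Field K] [Fintype K] [DecidableEq K] [CharP K p] [Algebra (ZMod p) K]
    (hcard : Fintype.card K = p ^ n)
    (hs : 0 < s) (hgcd : Nat.Coprime s (p ^ n - 1))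
    (ζ : ℂ) (hζ : ζ = Complex.exp (2 * Real.pi * Complex.I / p))
    (ψ : K → ℂ) (hψ : ∀ x, ψ x = ζ ^ (Algebra.trace (ZMod p) K x).val)
    (W : K → ℂ) (hW : ∀ u, W u = ∑ x : K, ψ (x ^ s - u * x)) :
    Module.finrank ℚ
        (IntermediateField.adjoin ℚ (Set.range fun u : Kˣ => W (u : K)))
      = (p - 1) / Nat.gcd (p - 1) (s - 1)
    ∧ (2 < p → p ≡ 1 [MOD 2 * ((p - 1) / Nat.gcd (p - 1) (s - 1))]) := by
  classical
  haveI hfp : Fact p.Prime := ⟨hp⟩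
  haveI : NeZero p := ⟨hp.ne_zero⟩
  set g := Nat.gcd (p - 1) (s - 1) with hgdef
  have hp1 : 0 < p - 1 := by have := hp.two_le; omega
  have hg0 : 0 < g := Nat.gcd_pos_of_pos_left _ hp1
  -- bijectivity of the s-power map on K
  have hsinj : Function.Injective (fun x : K => x ^ s) := by
    intro x y hxy
    simp only at hxy
    rcases eq_or_ne y 0 with rfl | hy
    · rw [zero_pow hs.ne'] at hxy
      exact pow_eq_zero_iff hs.ne' |>.mp hxy
    · have hx : x ≠ 0 := by
        intro h
        rw [h, zero_pow hs.ne'] at hxy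
        exact hy (pow_eq_zero_iff hs.ne' |>.mp hxy.symm)
      set u : Kˣ := Units.mk0 x hx * (Units.mk0 y hy)⁻¹ with hu
      have huc : (u : K) = x * y⁻¹ := by simp [hu]
      have huv : (u : K) ^ s = 1 := by
        rw [huc, mul_pow, inv_pow, hxy, mul_inv_cancel₀ (pow_ne_zero _ hy)]
      have hus : u ^ s = 1 := by ext; rw [Units.val_pow_eq_pow_val, huv, Units.val_one]
      have hdvd : orderOf u ∣ Nat.gcd s (Fintype.card K - 1) := by
        refine Nat.dvd_gcd (orderOf_dvd_of_pow_eq_one hus) ?_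
        rw [← Fintype.card_units]
        exact orderOf_dvd_card
      rw [hcard] at hdvd
      rw [hgcd] at hdvd
      have hu1 : u = 1 := orderOf_eq_one_iff.mp (Nat.eq_one_of_dvd_one hdvd)
      rw [hu, mul_inv_eq_one] at hu1
      have := congrArg Units.val hu1
      simpa using this
  have hsbij : Function.Bijective (fun x : K => x ^ s) :=
    Finite.injective_iff_bijective.mp hsinj
  -- basic facts about ζ and ψ
  have hζprim : IsPrimitiveRoot ζ p := by
    rw [hζ]; exact Complex.isPrimitiveRoot_exp p hp.ne_zero
  have hζp : ζ ^ p = 1 := hζprim.pow_eq_one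
  have hζ0 : ζ ≠ 0 := by
    intro h
    exact hp.ne_zero (hζprim.unique (h ▸ IsPrimitiveRoot.zero))
  have hψne : ∀ x, ψ x ≠ 0 := fun x => by rw [hψ]; exact pow_ne_zero _ hζ0
  have hψadd : ∀ x y : K, ψ (x + y) = ψ x * ψ y := by
    intro x y
    rw [hψ, hψ, hψ, ← pow_add, map_add, ZMod.val_add,
      ← aux_pow_mod ζ p hζp]
  have hψ0 : ψ 0 = 1 := by rw [hψ, map_zero, ZMod.val_zero, pow_zero]
  have hψeq1 : ∀ x : K, ψ x = 1 → Algebra.trace (ZMod p) K x = 0 := by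
    intro x h
    rw [hψ] at h
    have := (hζprim.pow_eq_one_iff_dvd _).mp h
    have hlt := ZMod.val_lt (Algebra.trace (ZMod p) K x)
    have hv0 : (Algebra.trace (ZMod p) K x).val = 0 := Nat.eq_zero_of_dvd_of_lt this hlt
    rwa [ZMod.val_eq_zero] at hv0
  -- trace nondegeneracy
  have htr : ∀ w : K, w ≠ 0 → ∃ z : K, Algebra.trace (ZMod p) K (w * z) ≠ 0 := by
    intro w hw
    have hne := Algebra.trace_ne_zero (ZMod p) K
    rw [DFunLike.ne_iff] at hne
    obtain ⟨z0, hz0⟩ := hne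
    exact ⟨w⁻¹ * z0, by rwa [← mul_assoc, mul_inv_cancel₀ hw, one_mul]⟩
  -- orthogonality
  have horth : ∀ w : K, w ≠ 0 → ∑ u : K, ψ (u * w) = 0 := by
    intro w hw
    obtain ⟨z, hz⟩ := htr w hw
    have hz1 : ψ (z * w) ≠ 1 := by
      intro h
      exact hz (by rw [mul_comm] at h; exact hψeq1 _ h)
    have hshift : ψ (z * w) * ∑ u : K, ψ (u * w) = ∑ u : K, ψ (u * w) := by
      rw [Finset.mul_sum]
      apply Fintype.sum_bijective (fun u : K => z + u) (Equiv.addLeft z).bijective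
      intro x
      rw [← hψadd]
      congr 1
      ring
    have hfac : (ψ (z * w) - 1) * ∑ u : K, ψ (u * w) = 0 := by
      rw [sub_mul, one_mul, hshift, sub_self]
    rcases mul_eq_zero.mp hfac with h | h
    · exact absurd (sub_eq_zero.mp h) hz1
    · exact h
  -- Fourier identity
  have hq0 : (Fintype.card K : ℂ) ≠ 0 := Nat.cast_ne_zero.mpr Fintype.card_ne_zero
  have hfour : ∀ y : K, ∑ u : K, W u * ψ (u * y) = (Fintype.card K : ℂ) * ψ (y ^ s) := by
    intro y
    have step1 : ∀ u : K, W u * ψ (u * y) = ∑ x : K, ψ (x ^ s) * ψ (u * (y - x)) := by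
      intro u
      rw [hW, Finset.sum_mul]
      refine Finset.sum_congr rfl fun x _ => ?_
      rw [← hψadd, ← hψadd]
      congr 1
      ring
    calc ∑ u : K, W u * ψ (u * y)
        = ∑ u : K, ∑ x : K, ψ (x ^ s) * ψ (u * (y - x)) :=
          Finset.sum_congr rfl fun u _ => step1 u
      _ = ∑ x : K, ∑ u : K, ψ (x ^ s) * ψ (u * (y - x)) := Finset.sum_comm
      _ = ∑ x : K, ψ (x ^ s) * ∑ u : K, ψ (u * (y - x)) :=
          Finset.sum_congr rfl fun x _ => (Finset.mul_sum _ _ _).symm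
      _ = (Fintype.card K : ℂ) * ψ (y ^ s) := by
          rw [Finset.sum_eq_single y]
          · simp only [sub_self, mul_zero, hψ0]
            rw [Finset.sum_const, Finset.card_univ, nsmul_eq_mul, mul_one, mul_comm]
          · intro x _ hxy
            rw [horth (y - x) (sub_ne_zero.mpr (Ne.symm hxy)), mul_zero]
          · intro h
            exact absurd (Finset.mem_univ y) h
  -- the key rigidity lemma
  have hkey : ∀ b : K, b ≠ 0 → (∀ u : K, W (b * u) = W u) → b ^ s = 1 := by
    intro b hb hinv
    have h1 : ∀ y : K, ψ ((b * y) ^ s) = ψ (y ^ s) := by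
      intro y
      have e1 := hfour (b * y)
      have e2 : ∑ u : K, W u * ψ (u * (b * y)) = ∑ u : K, W u * ψ (u * y) := by
        calc ∑ u : K, W u * ψ (u * (b * y))
            = ∑ u : K, W (b * u) * ψ ((b * u) * y) := by
              refine Finset.sum_congr rfl fun u _ => ?_
              rw [hinv u]
              congr 2
              ring
          _ = ∑ u : K, W u * ψ (u * y) :=
              Fintype.sum_bijective (fun u : K => b * u) ((Equiv.mulLeft₀ b hb).bijective)
                _ _ (fun u => rfl)
      rw [e2, hfour y] at e1
      exact (mul_left_cancel₀ hq0 e1).symm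
    have h2 : ∀ z : K, ψ (b ^ s * z) = ψ z := by
      intro z
      obtain ⟨y, hy⟩ := hsbij.2 z
      simp only at hy
      rw [← hy, ← mul_pow]
      exact h1 y
    by_contra hbs
    have hw : b ^ s - 1 ≠ 0 := sub_ne_zero.mpr hbs
    obtain ⟨z, hz⟩ := htr _ hw
    apply hz
    apply hψeq1
    have heq : ψ z = ψ ((b ^ s - 1) * z) * ψ z := by
      conv_lhs => rw [← h2 z]
      rw [← hψadd]
      congr 1
      ring
    exact mul_right_cancel₀ (hψne z) (by rw [one_mul]; exact heq.symm)
  -- the cyclotomic field E = ℚ(ζ)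
  set E : IntermediateField ℚ ℂ := ℚ⟮ζ⟯ with hE
  have hζint : IsIntegral ℚ ζ := (hζprim.isIntegral hp.pos).tower_top
  set ζE : E := AdjoinSimple.gen ℚ ζ with hζEdef
  have hζEcoe : (ζE : ℂ) = ζ := rfl
  have hζEprim : IsPrimitiveRoot ζE p := by
    rw [← IsPrimitiveRoot.coe_submonoidClass_iff (N := E) (ζ := ζE)]
    exact hζprim
  set p' : ℕ+ := ⟨p, hp.pos⟩ with hp'
  have hζprim' : IsPrimitiveRoot ζ (p' : ℕ) := hζprim
  haveI hcyc : IsCyclotomicExtension {(p' : ℕ)} ℚ E := by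
    letI := hζprim'.adjoin_isCyclotomicExtension ℚ
    refine IsCyclotomicExtension.equiv {(p' : ℕ)} ℚ _
      (Subalgebra.equivOfEq _ _
        (IntermediateField.adjoin_simple_toSubalgebra_of_isAlgebraic hζint.isAlgebraic).symm)
  haveI hfd : FiniteDimensional ℚ E := IntermediateField.adjoin.finiteDimensional hζint
  haveI hgal : IsGalois ℚ E := IsCyclotomicExtension.isGalois {(p' : ℕ)} ℚ E
  have hrankE : Module.finrank ℚ E = p - 1 := by
    rw [IsCyclotomicExtension.finrank (n := (p' : ℕ)) E
      (Polynomial.cyclotomic.irreducible_rat hp.pos)]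
    exact Nat.totient_prime hp
  -- the Weil sums as elements of E
  set ψE : K → E := fun x => ζE ^ (Algebra.trace (ZMod p) K x).val with hψEdef
  have hcoeψ : ∀ x, ((ψE x : E) : ℂ) = ψ x := by
    intro x
    rw [hψ, hψEdef]
    push_cast
    rfl
  set WE : K → E := fun u => ∑ x : K, ψE (x ^ s - u * x) with hWEdef
  have hcoeW : ∀ u, ((WE u : E) : ℂ) = W u := by
    intro u
    rw [hW, hWEdef]
    simp only
    rw [AddSubmonoidClass.coe_finset_sum]
    exact Finset.sum_congr rfl fun x _ => hcoeψ _
  -- the Galois action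
  set M := hζEprim.autToPow ℚ with hMdef
  have hζEp : ζE ^ p = 1 := hζEprim.pow_eq_one
  have hMspec : ∀ σ : E ≃ₐ[ℚ] E, σ ζE = ζE ^ ((M σ : ZMod p)).val :=
    fun σ => (hζEprim.autToPow_spec ℚ σ).symm
  have hζEprim' : IsPrimitiveRoot ζE (p' : ℕ) := hζEprim
  have hMinj : Function.Injective M := hζEprim'.autToPow_injective ℚ
  have hcardG : Fintype.card (E ≃ₐ[ℚ] E) = p - 1 := by
    rw [← Nat.card_eq_fintype_card, IsGalois.card_aut_eq_finrank ℚ E, hrankE]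
  have hcardU : Fintype.card (ZMod p)ˣ = p - 1 := by
    rw [ZMod.card_units_eq_totient, Nat.totient_prime hp]
  have hMbij : Function.Bijective M :=
    (Fintype.bijective_iff_injective_and_card M).mpr ⟨hMinj, by rw [hcardG, hcardU]⟩
  set α : (E ≃ₐ[ℚ] E) → K := fun σ => algebraMap (ZMod p) K ((M σ : ZMod p)) with hαdef
  have hαne : ∀ σ, α σ ≠ 0 := by
    intro σ h
    rw [hαdef] at h
    simp only at h
    rw [map_eq_zero_iff _ (algebraMap (ZMod p) K).injective] at h
    exact (M σ).ne_zero h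
  have hσψ : ∀ (σ : E ≃ₐ[ℚ] E) (x : K), σ (ψE x) = ψE (α σ * x) := by
    intro σ x
    have htrmul : Algebra.trace (ZMod p) K (α σ * x)
        = (M σ : ZMod p) * Algebra.trace (ZMod p) K x := by
      rw [hαdef]
      simp only
      rw [← Algebra.smul_def, map_smul, smul_eq_mul]
    rw [hψEdef]
    simp only
    rw [map_pow, hMspec, ← pow_mul, htrmul, ZMod.val_mul,
      ← aux_pow_mod _ p hζEp]
  have hσW : ∀ (σ : E ≃ₐ[ℚ] E) (c : K), c ^ s = (α σ)⁻¹ →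
      ∀ u : K, σ (WE u) = WE (α σ * c * u) := by
    intro σ c hc u
    have hc0 : c ≠ 0 := by
      intro h
      rw [h, zero_pow hs.ne'] at hc
      exact inv_ne_zero (hαne σ) hc.symm
    have hαc : α σ * c ^ s = 1 := by rw [hc, mul_inv_cancel₀ (hαne σ)]
    rw [hWEdef]
    simp only [map_sum]
    have hstep : (∑ x : K, σ (ψE (x ^ s - u * x))) = ∑ x : K, ψE (α σ * (x ^ s - u * x)) :=
      Finset.sum_congr rfl fun x _ => hσψ σ _
    rw [hstep]
    have hre := Fintype.sum_bijective (fun y : K => c * y) ((Equiv.mulLeft₀ c hc0).bijective)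
      (fun y => ψE (α σ * ((c * y) ^ s - u * (c * y))))
      (fun x => ψE (α σ * (x ^ s - u * x))) (fun y => rfl)
    rw [← hre]
    refine Finset.sum_congr rfl fun y _ => ?_
    have harg : α σ * ((c * y) ^ s - u * (c * y)) = y ^ s - (α σ * c * u) * y := by
      linear_combination (y ^ s) * hαc
    show ψE (α σ * ((c * y) ^ s - u * (c * y))) = ψE (y ^ s - (α σ * c * u) * y)
    rw [harg]
  -- the field generated by the Weil sums inside E
  set F' : IntermediateField ℚ E :=
    IntermediateField.adjoin ℚ (Set.range fun u : Kˣ => WE (u : K)) with hF'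
  have hmem : ∀ σ : E ≃ₐ[ℚ] E, σ ∈ F'.fixingSubgroup ↔ (M σ) ^ (s - 1) = 1 := by
    intro σ
    rw [IntermediateField.mem_fixingSubgroup_iff]
    constructor
    · intro hσ
      have hfixW : ∀ u : Kˣ, σ (WE (u : K)) = WE (u : K) := fun u =>
        hσ _ (hF' ▸ IntermediateField.subset_adjoin ℚ _ ⟨u, rfl⟩)
      obtain ⟨c, hc⟩ := hsbij.2 (α σ)⁻¹
      simp only at hc
      have hc0 : c ≠ 0 := by
        intro h
        rw [h, zero_pow hs.ne'] at hc
        exact inv_ne_zero (hαne σ) hc.symm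
      have hb0 : α σ * c ≠ 0 := mul_ne_zero (hαne σ) hc0
      have hbW : ∀ u : K, W (α σ * c * u) = W u := by
        intro u
        rcases eq_or_ne u 0 with rfl | hu
        · rw [mul_zero]
        · have h1 := hσW σ c hc u
          have h2 : σ (WE u) = WE u := by
            have := hfixW (Units.mk0 u hu)
            simpa using this
          have h3 : WE (α σ * c * u) = WE u := by rw [← h1, h2]
          have h4 := congrArg (fun z : E => (z : ℂ)) h3
          simp only [hcoeW] at h4
          exact h4
      have hbs := hkey _ hb0 hbW
      have hαs : (α σ) ^ (s - 1) = 1 := by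
        have h4 : (α σ) ^ s * c ^ s = 1 := by rw [← mul_pow]; exact hbs
        rw [hc] at h4
        have h5 : (α σ) ^ s = α σ := by
          have := congrArg (fun z : K => z * α σ) h4
          rwa [mul_assoc, inv_mul_cancel₀ (hαne σ), mul_one, one_mul] at this
        have h6 : (α σ) ^ (s - 1) * α σ = α σ ^ s := by
          rw [← pow_succ]
          congr 1
          omega
        rw [h5] at h6
        exact mul_right_cancel₀ (hαne σ) (by rw [h6, one_mul])
      have hz : ((M σ : ZMod p)) ^ (s - 1) = 1 := by
        apply (algebraMap (ZMod p) K).injective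
        rw [map_pow, map_one]
        exact hαs
      exact Units.ext (by rw [Units.val_pow_eq_pow_val, Units.val_one]; exact hz)
    · intro ha
      have hαs : (α σ) ^ (s - 1) = 1 := by
        rw [hαdef]
        simp only
        rw [← map_pow, ← Units.val_pow_eq_pow_val, ha, Units.val_one, map_one]
      have hαss : (α σ) ^ s = α σ := by
        have h6 : (α σ) ^ (s - 1) * α σ = α σ ^ s := by
          rw [← pow_succ]
          congr 1
          omega
        rw [hαs, one_mul] at h6
        exact h6.symm
      have hc : ((α σ)⁻¹ : K) ^ s = (α σ)⁻¹ := by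
        rw [inv_pow, hαss]
      have hfix : ∀ u : Kˣ, σ (WE (u : K)) = WE (u : K) := by
        intro u
        have := hσW σ (α σ)⁻¹ hc u
        rwa [mul_inv_cancel₀ (hαne σ), one_mul] at this
      intro x hx
      refine aux_fix_adjoin _ σ ?_ x hx
      rintro y ⟨u, rfl⟩
      exact hfix u
  -- cardinality of the fixing subgroup
  have hcardfix : Fintype.card F'.fixingSubgroup = g := by
    rw [hgdef, ← aux_card_pow_eq_one p (s - 1)]
    exact Fintype.card_congr
      (Equiv.subtypeEquiv (Equiv.ofBijective M hMbij) (fun σ => hmem σ))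
  -- degree computation
  have hfixeq : IntermediateField.fixedField F'.fixingSubgroup = F' :=
    IsGalois.fixedField_fixingSubgroup F'
  have hrankF'E : Module.finrank (↥F') (↥E) = g := by
    conv_lhs => rw [← hfixeq]
    rw [IntermediateField.finrank_fixedField_eq_card]
    exact Nat.card_eq_fintype_card.trans hcardfix
  have hmul : Module.finrank ℚ (↥F') * g = p - 1 := by
    have h0 := Module.finrank_mul_finrank ℚ (↥F') (↥E)
    rw [hrankF'E, hrankE] at h0
    exact h0
  have hdeg' : Module.finrank ℚ (↥F') = (p - 1) / g := by
    rw [← hmul, Nat.mul_div_cancel _ hg0]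
  -- transfer to ℂ
  have hmap : IntermediateField.map E.val F'
      = IntermediateField.adjoin ℚ (Set.range fun u : Kˣ => W (u : K)) := by
    rw [hF']
    refine (IntermediateField.adjoin_map (S := _) (f := E.val)).trans ?_
    congr 1
    rw [← Set.range_comp]
    refine congrArg Set.range (funext fun u => ?_)
    exact hcoeW u
  have h7 : Module.finrank ℚ (IntermediateField.map E.val F') = Module.finrank ℚ (↥F') :=
    (LinearEquiv.finrank_eq (F'.equivMap E.val).toLinearEquiv).symm
  have hfinal : Module.finrank ℚ
      (IntermediateField.adjoin ℚ (Set.range fun u : Kˣ => W (u : K))) = (p - 1) / g := by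
    rw [← hmap, h7, hdeg']
  refine ⟨hfinal, ?_⟩
  -- part 2 : p ≡ 1 (mod 2m)
  intro hp2
  have h2g : 2 ∣ g := by
    rw [hgdef]
    apply Nat.dvd_gcd
    · have hodd : Odd p := hp.odd_of_ne_two (by omega)
      have := Nat.odd_iff.mp hodd
      omega
    · rcases eq_or_ne s 1 with rfl | hs1
      · simp
      · have hpn : 1 ≤ p ^ n := Nat.one_le_pow n p hp.pos
        have hoddpn : Odd (p ^ n) := (hp.odd_of_ne_two (by omega)).pow
        have hev : 2 ∣ p ^ n - 1 := by
          have := Nat.odd_iff.mp hoddpn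
          omega
        have hso : ¬ (2 ∣ s) := by
          intro h2s
          have h2d : 2 ∣ Nat.gcd s (p ^ n - 1) := Nat.dvd_gcd h2s hev
          rw [hgcd] at h2d
          omega
        have : s % 2 = 1 := by omega
        omega
  have hdvd : 2 * ((p - 1) / g) ∣ p - 1 := by
    obtain ⟨t, ht⟩ := h2g
    obtain ⟨m, hm⟩ := (Nat.gcd_dvd_left (p - 1) (s - 1) : g ∣ p - 1)
    have hq2 : (p - 1) / g = m := by rw [hm]; exact Nat.mul_div_cancel_left m hg0
    rw [hq2]
    exact ⟨t, by rw [← hgdef, ht] at hm; rw [hm]; ring⟩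
  exact ((Nat.modEq_iff_dvd' (by omega : 1 ≤ p)).mpr hdvd).symm
end

section
/- Let K be a finite field of characteristic p and order q, s an invertible exponent over K, and let σ be the generator of Gal(Q(ζ_p)/Q) sending ζ_p to ζ_p^γ for a primitive root γ mod p. Suppose A₀, …, A_{k−1} are distinct Weil sum values permuted in a k-cycle by the restriction τ of σ to the value set (τ(A_i) = A_{i+1 mod k}). Then the frequencies N_{A_i} = |{u ∈ K^× : W_u = A_i}| are all equal, k divides the order m of τ, and N_{A_0} is a multiple of m/k. -/
private lemma aux_dvd_card {G : Type*} [Group G] [Fintype G] [DecidableEq G]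
    (g : G) (S : Finset G) (hS : ∀ x ∈ S, g * x ∈ S) : orderOf g ∣ S.card := by
  classical
  induction S using Finset.strongInduction with
  | _ S ih =>
  rcases S.eq_empty_or_nonempty with rfl | ⟨x, hx⟩
  · simp
  · set d := orderOf g with hd
    have hdpos : 0 < d := orderOf_pos g
    have hpowmem : ∀ t, g ^ t * x ∈ S := by
      intro t; induction t with
      | zero => simpa using hx
      | succ t iht =>
        have := hS _ iht
        rwa [← mul_assoc, ← pow_succ'] at this
    set C : Finset G := (Finset.range d).image (fun t => g ^ t * x) with hC
    have hCsub : C ⊆ S := by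
      intro y hy
      simp only [hC, Finset.mem_image, Finset.mem_range] at hy
      obtain ⟨t, _, rfl⟩ := hy; exact hpowmem t
    have hCcard : C.card = d := by
      rw [hC, Finset.card_image_of_injOn, Finset.card_range]
      intro a ha b hb hab
      simp only [Finset.coe_range, Set.mem_Iio] at ha hb
      have : g ^ a = g ^ b := mul_right_cancel hab
      exact pow_injOn_Iio_orderOf (by simpa using ha) (by simpa using hb) this
    have hCne : C.Nonempty := ⟨x, by
      simp only [hC, Finset.mem_image, Finset.mem_range]
      exact ⟨0, hdpos, by simp⟩⟩
    have hstab : ∀ y ∈ S \ C, g * y ∈ S \ C := by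
      intro y hy
      rw [Finset.mem_sdiff] at hy ⊢
      refine ⟨hS _ hy.1, fun hgy => hy.2 ?_⟩
      simp only [hC, Finset.mem_image, Finset.mem_range] at hgy ⊢
      obtain ⟨t, ht, hgyt⟩ := hgy
      rcases Nat.eq_zero_or_pos t with rfl | htpos
      · refine ⟨d - 1, by omega, ?_⟩
        have h1 : g * (g ^ (d-1) * x) = g * y := by
          rw [← mul_assoc, ← pow_succ']
          have hd1 : d - 1 + 1 = d := by omega
          rw [hd1, pow_orderOf_eq_one, one_mul]
          simpa using hgyt
        exact mul_left_cancel h1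
      · refine ⟨t - 1, by omega, ?_⟩
        have h1 : g * (g ^ (t-1) * x) = g * y := by
          rw [← mul_assoc, ← pow_succ']
          have ht1 : t - 1 + 1 = t := by omega
          rw [ht1, hgyt]
        exact mul_left_cancel h1
    have hss : S \ C ⊂ S := Finset.sdiff_ssubset hCsub hCne
    have := ih (S \ C) hss hstab
    have hcards : (S \ C).card + C.card = S.card := Finset.card_sdiff_add_card_eq_card hCsub
    rw [← hcards, hCcard]
    exact Nat.dvd_add this dvd_rfl

open Fin.NatCast in
private lemma fin_const {k : ℕ} [NeZero k] {α : Type*} (f : Fin k → α)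
    (h : ∀ i, f (i + 1) = f i) (i : Fin k) : f i = f 0 := by
  have key : ∀ t : ℕ, f (t : Fin k) = f 0 := by
    intro t; induction t with
    | zero => simp
    | succ t iht => rw [Nat.cast_succ, h, iht]
  simpa using key i.val


/-- If the restriction `τ` (of the generator `σ` of `Gal(ℚ(ζ_p)/ℚ)`, `σ(ζ) = ζ^γ` for a
primitive root `γ` mod `p`) to the Weil value set permutes distinct values
`A₀, …, A_{k−1}` in a `k`-cycle, then the frequencies `N_{A_i}` are all equal,
`k` divides the order `m` of `τ`, and `N_{A₀}` is a multiple of `m/k`. -/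
theorem stmt_17 (p n s k : ℕ) (hp : p.Prime) (hn : 0 < n) [NeZero k]
    (K : Type*) [Field K] [Fintype K] [DecidableEq K] [CharP K p] [Algebra (ZMod p) K]
    (hcard : Fintype.card K = p ^ n)
    (hs : 0 < s) (hgcd : Nat.Coprime s (p ^ n - 1))
    (L : Type*) [Field L] [Algebra ℚ L]
    [IsCyclotomicExtension ({p} : Set ℕ) ℚ L]
    (ζ : L) (hζ : IsPrimitiveRoot ζ p)
    (ψ : K → L) (hψ : ∀ x, ψ x = ζ ^ (Algebra.trace (ZMod p) K x).val)
    (W : K → L) (hW : ∀ u, W u = ∑ x : K, ψ (x ^ s - u * x))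
    (γ : (ZMod p)ˣ) (hγ : orderOf γ = p - 1)
    (σ : L ≃ₐ[ℚ] L) (hσ : σ ζ = ζ ^ ((γ : ZMod p)).val)
    (m : ℕ)
    (hm : m = sInf {d : ℕ | 0 < d ∧ ∀ u : Kˣ, (σ ^ d) (W (u : K)) = W (u : K)})
    (A : Fin k → L) (hAinj : Function.Injective A)
    (hAval : ∀ i, ∃ u : Kˣ, W (u : K) = A i)
    (hcyc : ∀ i : Fin k, σ (A i) = A (i + 1)) :
    (∀ i j : Fin k,
        Nat.card {u : Kˣ // W (u : K) = A i} = Nat.card {u : Kˣ // W (u : K) = A j})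
    ∧ k ∣ m
    ∧ (m / k) ∣ Nat.card {u : Kˣ // W (u : K) = A 0} := by
  classical
  haveI : Fact p.Prime := ⟨hp⟩
  -- ζ^a depends only on a mod p
  have hζp : ζ ^ p = 1 := hζ.pow_eq_one
  have hzmod : ∀ a : ℕ, ζ ^ (a % p) = ζ ^ a := by
    intro a
    conv_rhs => rw [← Nat.mod_add_div a p]
    rw [pow_add, pow_mul, hζp, one_pow, mul_one]
  -- the unit γ inside K
  set gu : Kˣ := Units.map (algebraMap (ZMod p) K : ZMod p →* K) γ with hgu
  have hguK : (gu : K) = algebraMap (ZMod p) K (γ : ZMod p) := rfl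
  -- σ on ψ
  have hsψ : ∀ x : K, σ (ψ x) = ψ ((gu : K) * x) := by
    intro x
    rw [hψ, hψ, map_pow, hσ, ← pow_mul]
    have htr : Algebra.trace (ZMod p) K ((gu : K) * x)
        = (γ : ZMod p) * Algebra.trace (ZMod p) K x := by
      rw [hguK, ← Algebra.smul_def, map_smul, smul_eq_mul]
    rw [htr, ← hzmod ((γ : ZMod p).val * (Algebra.trace (ZMod p) K x).val),
      ← ZMod.val_mul]
  -- existence of h with h^s = gu⁻¹
  have hcardU : Nat.card Kˣ = p ^ n - 1 := by
    rw [Nat.card_eq_fintype_card, Fintype.card_units, hcard]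
  have hpow : Function.Surjective (fun y : Kˣ => y ^ s) := by
    have he : (Nat.card Kˣ).Coprime s := by rw [hcardU]; exact hgcd.symm
    exact fun y => ⟨(powCoprime he).symm y, by
      simpa [powCoprime] using (powCoprime he).apply_symm_apply y⟩
  obtain ⟨h, hh⟩ := hpow gu⁻¹
  set c : Kˣ := gu * h with hc
  -- key identity: σ (W u) = W (c * u)
  have hkey : ∀ u : K, σ (W u) = W ((c : K) * u) := by
    intro u
    rw [hW, hW, map_sum,
      ← Equiv.sum_comp (Equiv.mulLeft₀ (h : K) (Units.ne_zero h))
        (fun x => σ (ψ (x ^ s - u * x)))]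
    refine Finset.sum_congr rfl fun x _ => ?_
    simp only [Equiv.mulLeft₀_apply]
    rw [hsψ]
    congr 1
    have hgh : (gu : K) * (h : K) ^ s = 1 := by
      have h2 : (gu * h ^ s : Kˣ) = 1 := by rw [show h ^ s = gu⁻¹ from hh, mul_inv_cancel]
      calc (gu : K) * (h : K) ^ s = ((gu * h ^ s : Kˣ) : K) := by push_cast; ring
        _ = 1 := by rw [h2]; rfl
    have hcK : (c : K) = (gu : K) * (h : K) := rfl
    rw [hcK]
    linear_combination (x ^ s) * hgh
  -- iterated key identity
  have hkeyd : ∀ (d : ℕ) (u : K), (σ ^ d) (W u) = W ((c : K) ^ d * u) := by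
    intro d
    induction d with
    | zero => intro u; simp
    | succ d ihd =>
      intro u
      have h1 : (σ ^ (d + 1)) (W u) = (σ ^ d) (σ (W u)) := by rw [pow_succ]; rfl
      rw [h1, hkey u, ihd]
      congr 1; ring
  have hc1 : ∀ d : ℕ, c ^ d = 1 → ∀ u : Kˣ, (σ ^ d) (W (u : K)) = W (u : K) := by
    intro d hd u
    rw [hkeyd]
    have hcd : ((c : K)) ^ d = 1 := by
      rw [← Units.val_pow_eq_pow_val, hd, Units.val_one]
    rw [hcd, one_mul]
  set e := orderOf c with he
  have he_pos : 0 < e := orderOf_pos c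
  have heS : e ∈ {d : ℕ | 0 < d ∧ ∀ u : Kˣ, (σ ^ d) (W (u : K)) = W (u : K)} :=
    ⟨he_pos, hc1 e (pow_orderOf_eq_one c)⟩
  have hmS : m ∈ {d : ℕ | 0 < d ∧ ∀ u : Kˣ, (σ ^ d) (W (u : K)) = W (u : K)} := by
    rw [hm]; exact Nat.sInf_mem ⟨e, heS⟩
  obtain ⟨hmpos, hmfix⟩ := hmS
  have hiter : ∀ (t : ℕ) (u : Kˣ), ((σ ^ m) ^ t) (W (u : K)) = W (u : K) := by
    intro t
    induction t with
    | zero => intro u; simp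
    | succ t iht =>
      intro u
      have h1 : ((σ ^ m) ^ (t + 1)) (W (u : K)) = ((σ ^ m) ^ t) ((σ ^ m) (W (u : K))) := by
        rw [pow_succ]; rfl
      rw [h1, hmfix u, iht]
  have hme : m ∣ e := by
    have hr : ∀ u : Kˣ, (σ ^ (e % m)) (W (u : K)) = W (u : K) := by
      intro u
      have h1 : (σ ^ e) (W (u : K)) = W (u : K) := heS.2 u
      have h2 : σ ^ e = σ ^ (e % m) * (σ ^ m) ^ (e / m) := by
        rw [← pow_mul, ← pow_add, Nat.mod_add_div]
      rw [h2] at h1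
      have h3 : (σ ^ (e % m) * (σ ^ m) ^ (e / m)) (W (u : K))
          = (σ ^ (e % m)) (((σ ^ m) ^ (e / m)) (W (u : K))) := rfl
      rw [h3, hiter] at h1
      exact h1
    by_contra hnd
    have hlt : 0 < e % m := Nat.pos_of_ne_zero fun h0 => hnd (Nat.dvd_of_mod_eq_zero h0)
    have hmem : e % m ∈ {d : ℕ | 0 < d ∧ ∀ u : Kˣ, (σ ^ d) (W (u : K)) = W (u : K)} :=
      ⟨hlt, hr⟩
    have hle := Nat.sInf_le hmem
    rw [← hm] at hle
    have := Nat.mod_lt e hmpos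
    omega
  -- shift lemma
  letI : NatCast (Fin k) := Fin.NatCast.instNatCast k
  have hshift : ∀ (d : ℕ) (i : Fin k), (σ ^ d) (A i) = A (i + (d : Fin k)) := by
    intro d
    induction d with
    | zero => intro i; simp
    | succ d ihd =>
      intro i
      have h1 : (σ ^ (d + 1)) (A i) = (σ ^ d) (σ (A i)) := by rw [pow_succ]; rfl
      rw [h1, hcyc, ihd]
      congr 1
      ext
      simp [Fin.val_add]
      congr 1
      omega
  -- frequencies
  have hfreq : ∀ i : Fin k,
      Nat.card {u : Kˣ // W (u : K) = A (i + 1)} = Nat.card {u : Kˣ // W (u : K) = A i} := by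
    intro i
    refine Nat.card_congr ?_
    refine
      { toFun := fun u => ⟨c⁻¹ * u.1, ?_⟩
        invFun := fun u => ⟨c * u.1, ?_⟩
        left_inv := ?_
        right_inv := ?_ }
    · apply σ.injective
      have hcast : (c : K) * ((c⁻¹ * u.1 : Kˣ) : K) = (u.1 : K) := by
        push_cast
        field_simp
      rw [hkey, hcast, u.2, hcyc]
    · have hcast : ((c * u.1 : Kˣ) : K) = (c : K) * (u.1 : K) := by push_cast; ring
      rw [hcast, ← hkey, u.2, hcyc]
    · intro u; apply Subtype.ext; simp
    · intro u; apply Subtype.ext; simp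
  -- k ∣ m
  obtain ⟨u0, hu0⟩ := hAval 0
  have hA0 : (σ ^ m) (A 0) = A 0 := by rw [← hu0]; exact hmfix u0
  have hA0' : A (0 + (m : Fin k)) = A 0 := by rw [← hshift m 0, hA0]
  have hkm : k ∣ m := by
    have h1 := hAinj hA0'
    rwa [zero_add, Fin.natCast_eq_zero] at h1
  have hAk : (σ ^ k) (A 0) = A 0 := by
    rw [hshift k 0]
    congr 1
    simp [Fin.natCast_self]
  -- counting
  set Fs : Finset Kˣ := Finset.univ.filter (fun u => W (u : K) = A 0) with hFs
  have hstab : ∀ u ∈ Fs, c ^ k * u ∈ Fs := by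
    intro u hu
    simp only [hFs, Finset.mem_filter, Finset.mem_univ, true_and] at hu ⊢
    have hcast : ((c ^ k * u : Kˣ) : K) = (c : K) ^ k * (u : K) := by push_cast; ring
    rw [hcast, ← hkeyd k, hu, hAk]
  have hdvd1 : orderOf (c ^ k) ∣ Fs.card := aux_dvd_card (c ^ k) Fs hstab
  have hcardsubt : Nat.card {u : Kˣ // W (u : K) = A 0} = Fs.card := by
    rw [Nat.card_eq_fintype_card, Fintype.card_subtype]
  have hke : k ∣ e := hkm.trans hme
  have hord : orderOf (c ^ k) = e / k := by
    rw [orderOf_pow, ← he, Nat.gcd_eq_right hke]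
  have hmk : (m / k) ∣ (e / k) := by
    obtain ⟨a, ha⟩ := hme
    obtain ⟨b, hb⟩ := hkm
    have hk0 : 0 < k := Nat.pos_of_ne_zero (NeZero.ne k)
    rw [ha, hb, Nat.mul_div_cancel_left b hk0, Nat.mul_assoc,
      Nat.mul_div_cancel_left (b * a) hk0]
    exact Dvd.intro a rfl
  refine ⟨?_, hkm, ?_⟩
  · intro i j
    have h1 := fin_const (fun i => Nat.card {u : Kˣ // W (u : K) = A i}) hfreq i
    have h2 := fin_const (fun i => Nat.card {u : Kˣ // W (u : K) = A i}) hfreq j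
    exact h1.trans h2.symm
  · rw [hcardsubt]
    exact hmk.trans (hord ▸ hdvd1)
end

section
/- Let K be a finite field, s an invertible exponent over K, and τ the restriction to the Weil value set W_{K,s} = {W_u : u ∈ K^×} of the generator σ of Gal(Q(ζ_p)/Q). Then τ is a single cycle on W_{K,s} if and only if K = F_2. -/
/-- The restriction `τ` of the Galois generator `σ` to the Weil value set
`{W_u : u ∈ K^×}` is a single cycle if and only if `K = F₂`. -/
theorem stmt_18 (p n s : ℕ) (hp : p.Prime) (hn : 0 < n)
    (K : Type*) [Field K] [Fintype K] [DecidableEq K] [CharP K p] [Algebra (ZMod p) K]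
    (hcard : Fintype.card K = p ^ n)
    (hs : 0 < s) (hgcd : Nat.Coprime s (p ^ n - 1))
    (L : Type*) [Field L] [Algebra ℚ L]
    [IsCyclotomicExtension ({p} : Set ℕ) ℚ L]
    (ζ : L) (hζ : IsPrimitiveRoot ζ p)
    (ψ : K → L) (hψ : ∀ x, ψ x = ζ ^ (Algebra.trace (ZMod p) K x).val)
    (W : K → L) (hW : ∀ u, W u = ∑ x : K, ψ (x ^ s - u * x))
    (γ : (ZMod p)ˣ) (hγ : orderOf γ = p - 1)
    (σ : L ≃ₐ[ℚ] L) (hσ : σ ζ = ζ ^ ((γ : ZMod p)).val) :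
    (∀ A B : L, (∃ u : Kˣ, W (u : K) = A) → (∃ u : Kˣ, W (u : K) = B) →
        ∃ j : ℕ, (σ ^ j) A = B)
      ↔ Fintype.card K = 2 := by
  classical
  haveI : Fact p.Prime := ⟨hp⟩
  haveI : NeZero p := ⟨hp.pos.ne'⟩
  constructor
  · intro hcyc
    -- basic facts about ζ and ψ
    have hzp : ζ ^ p = 1 := hζ.pow_eq_one
    have hzmod : ∀ m : ℕ, ζ ^ m = ζ ^ (m % p) := by
      intro m
      conv_lhs => rw [← Nat.div_add_mod m p]
      rw [pow_add, pow_mul, hzp, one_pow, one_mul]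
    have hψ0 : ψ 0 = 1 := by
      rw [hψ, map_zero, ZMod.val_zero, pow_zero]
    have hψ_add : ∀ x y : K, ψ (x + y) = ψ x * ψ y := by
      intro x y
      rw [hψ, hψ, hψ, ← pow_add, map_add, ZMod.val_add, ← hzmod]
    -- existence of a nontrivial character value
    have hTr : ∃ a : K, (Algebra.trace (ZMod p) K a) ≠ 0 := by
      have hring : ringChar K = p := ringChar.eq K p
      subst hring
      obtain ⟨b, hb⟩ := FiniteField.trace_to_zmod_nondegenerate K (one_ne_zero (α := K))
      exact ⟨1 * b, hb⟩
    obtain ⟨a0, ha0⟩ := hTr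
    have hψa0 : ψ a0 ≠ 1 := by
      rw [hψ]
      apply hζ.pow_ne_one_of_pos_of_lt
      · exact fun h => ha0 ((ZMod.val_eq_zero _).mp h)
      · exact ZMod.val_lt _
    have hsum0 : ∑ x : K, ψ x = 0 := by
      have h1 : ∑ x : K, ψ x = ψ a0 * ∑ x : K, ψ x := by
        rw [Finset.mul_sum]
        exact Fintype.sum_equiv (Equiv.addLeft (-a0)) _ _
          (fun x => by rw [Equiv.coe_addLeft, ← hψ_add, add_neg_cancel_left])
      have h2 : (1 - ψ a0) * ∑ x : K, ψ x = 0 := by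
        rw [sub_mul, one_mul]
        exact sub_eq_zero.mpr h1
      rcases mul_eq_zero.mp h2 with h | h
      · exact absurd (sub_eq_zero.mp h).symm hψa0
      · exact h
    -- x ↦ x^s is bijective on K
    have hq2 : 2 ≤ p ^ n := by
      calc 2 ≤ p := hp.two_le
      _ ≤ p ^ n := Nat.le_self_pow hn.ne' p
    have hcardu : Fintype.card Kˣ = p ^ n - 1 := by
      rw [Fintype.card_units, hcard]
    have hpow_inj : Function.Injective (fun x : K => x ^ s) := by
      intro x y hxy
      simp only at hxy
      by_cases hx : x = 0
      · subst hx
        rw [zero_pow hs.ne', eq_comm, pow_eq_zero_iff hs.ne'] at hxy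
        exact hxy.symm
      · have hy : y ≠ 0 := by
          intro hy
          rw [hy, zero_pow hs.ne', pow_eq_zero_iff hs.ne'] at hxy
          exact hx hxy
        have hxy' : (Units.mk0 x hx) ^ s = (Units.mk0 y hy) ^ s := by
          ext
          simpa using hxy
        have h1 : ((Units.mk0 x hx) * (Units.mk0 y hy)⁻¹) ^ s = 1 := by
          rw [mul_pow, hxy', inv_pow, mul_inv_cancel]
        have h2 : orderOf ((Units.mk0 x hx) * (Units.mk0 y hy)⁻¹) ∣ Nat.gcd s (p ^ n - 1) := by
          apply Nat.dvd_gcd (orderOf_dvd_of_pow_eq_one h1)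
          rw [← hcardu]
          exact orderOf_dvd_card
        rw [hgcd, Nat.dvd_one, orderOf_eq_one_iff, mul_inv_eq_one] at h2
        have := congrArg (Units.val) h2
        simpa using this
    -- the full character sum over K of W is q
    have hsumW : ∑ u : K, W u = (Fintype.card K : L) := by
      have hswap : ∑ u : K, W u = ∑ x : K, ∑ u : K, ψ (x ^ s - u * x) := by
        simp_rw [hW]
        exact Finset.sum_comm
      have hinner : ∀ x : K, x ≠ 0 → ∑ u : K, ψ (x ^ s - u * x) = 0 := by
        intro x hx
        have h1 : ∀ u : K, ψ (x ^ s - u * x) = ψ (x ^ s) * ψ (-(u * x)) := by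
          intro u
          rw [← hψ_add, sub_eq_add_neg]
        simp_rw [h1, ← Finset.mul_sum]
        have h2 : ∑ u : K, ψ (-(u * x)) = 0 := by
          rw [← hsum0]
          exact Fintype.sum_equiv ((Equiv.mulRight₀ x hx).trans (Equiv.neg K)) _ _
            (fun u => rfl)
        rw [h2, mul_zero]
      rw [hswap, Fintype.sum_eq_single (0 : K) (fun x hx => hinner x hx)]
      simp only [zero_pow hs.ne', mul_zero]
      simp [hψ0, Finset.card_univ]
    have hW0 : W 0 = 0 := by
      rw [hW]
      simp only [zero_mul, sub_zero]
      rw [← hsum0]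
      exact Fintype.sum_bijective (fun x : K => x ^ s)
        ((Finite.injective_iff_bijective).mp hpow_inj) (fun x : K => ψ (x ^ s)) ψ
        (fun x => rfl)
    have hWsum : ∑ u : Kˣ, W (u : K) = (Fintype.card K : L) := by
      have h1 : ∑ u : Kˣ, W (u : K) = ∑ x : {a : K // a ≠ 0}, W (x : K) :=
        Fintype.sum_equiv unitsEquivNeZero _ _ (fun u => rfl)
      have h2 : ∑ x ∈ Finset.univ.erase (0 : K), W x = ∑ x : {a : K // a ≠ 0}, W (x : K) :=
        Finset.sum_subtype _ (by simp) W
      rw [h1, ← h2, Finset.sum_erase _ hW0, hsumW]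
    -- inverse of s mod q-1 and the multiplier c
    have hm1 : 1 ≤ p ^ n - 1 := by omega
    haveI : NeZero (p ^ n - 1) := ⟨by omega⟩
    set m := p ^ n - 1 with hm
    set s' : ℕ := ((s : ZMod m)⁻¹).val with hs'def
    have hss' : s * s' ≡ 1 [MOD m] := by
      have h1 : ((s * s' : ℕ) : ZMod m) = ((1 : ℕ) : ZMod m) := by
        push_cast
        rw [hs'def, ZMod.natCast_val, ZMod.cast_id]
        exact ZMod.coe_mul_inv_eq_one s hgcd
      exact (ZMod.natCast_eq_natCast_iff _ _ _).mp h1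
    set g' : Kˣ := Units.map (algebraMap (ZMod p) K).toMonoidHom γ with hgdef
    have hgpow : g' ^ (p - 1) = 1 := by
      have h3 : γ ^ (p - 1) = 1 := by rw [← hγ]; exact pow_orderOf_eq_one γ
      rw [hgdef, ← map_pow, h3, map_one]
    have hgm : ∀ t : Kˣ, t ^ m = 1 := by
      intro t
      rw [← hcardu]
      exact pow_card_eq_one
    set b' : Kˣ := (g'⁻¹) ^ s' with hbdef
    set c' : Kˣ := g' * b' with hcdef
    have hgb : g' * b' ^ s = 1 := by
      have h1 : b' ^ s = g'⁻¹ := by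
        rw [hbdef, ← pow_mul]
        have h2 : (g'⁻¹) ^ (s' * s) = (g'⁻¹) ^ 1 := by
          apply pow_eq_pow_iff_modEq.mpr
          have hd : orderOf (g'⁻¹) ∣ m := orderOf_dvd_of_pow_eq_one (hgm g'⁻¹)
          have h5 : s' * s ≡ 1 [MOD m] := by rwa [Nat.mul_comm s' s]
          exact Nat.ModEq.of_dvd hd h5
        rw [h2, pow_one]
      rw [h1, mul_inv_cancel]
    -- Galois action on character values
    have hσψ : ∀ y : K, σ (ψ y) = ψ ((g' : K) * y) := by
      intro y
      have htr : Algebra.trace (ZMod p) K ((g' : K) * y)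
          = (γ : ZMod p) * Algebra.trace (ZMod p) K y := by
        have hco : (g' : K) = algebraMap (ZMod p) K (γ : ZMod p) := rfl
        rw [hco, ← Algebra.smul_def, map_smul, smul_eq_mul]
      rw [hψ, hψ, htr, map_pow, hσ, ← pow_mul, ZMod.val_mul, ← hzmod]
    have hbK : (b' : K) ≠ 0 := b'.ne_zero
    have hgbK : (g' : K) * (b' : K) ^ s = 1 := by
      have := congrArg (Units.val) hgb
      simpa using this
    have hσW : ∀ u : K, σ (W u) = W ((c' : K) * u) := by
      intro u
      rw [hW, map_sum, hW]
      simp_rw [hσψ]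
      refine (Fintype.sum_equiv (Equiv.mulLeft₀ (b' : K) hbK)
        (fun y : K => ψ (y ^ s - ((c' : K) * u) * y))
        (fun x : K => ψ ((g' : K) * (x ^ s - u * x))) (fun y => ?_)).symm
      show ψ (y ^ s - ((c' : K) * u) * y)
        = ψ ((g' : K) * (((b' : K) * y) ^ s - u * ((b' : K) * y)))
      congr 1
      have hcK : (c' : K) = (g' : K) * (b' : K) := rfl
      rw [hcK, mul_sub, mul_pow, ← mul_assoc, hgbK, one_mul]
      ring
    have hσjW : ∀ (j : ℕ) (u : K), (σ ^ j) (W u) = W (((c' : K)) ^ j * u) := by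
      intro j
      induction j with
      | zero => intro u; simp
      | succ j ih =>
        intro u
        rw [pow_succ' σ j, AlgEquiv.mul_apply, ih, hσW, ← mul_assoc, ← pow_succ']
    -- single-cycle hypothesis in concrete form
    have hstep : ∀ u v : Kˣ, ∃ j : ℕ, W (((c' : K)) ^ j * (u : K)) = W (v : K) := by
      intro u v
      obtain ⟨j, hj⟩ := hcyc (W u) (W v) ⟨u, rfl⟩ ⟨v, rfl⟩
      exact ⟨j, by rw [← hσjW j u, hj]⟩
    set fib : Kˣ → Finset Kˣ := fun u => Finset.univ.filter (fun w => W ↑w = W ↑u) with hfib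
    have hfib_le : ∀ u v : Kˣ, (fib u).card ≤ (fib v).card := by
      intro u v
      obtain ⟨j, hj⟩ := hstep u v
      apply Finset.card_le_card_of_injOn (fun w => c' ^ j * w)
      · intro w hw
        simp only [hfib, Finset.coe_filter, Set.mem_setOf_eq, Finset.mem_filter, Finset.mem_univ, true_and] at hw ⊢
        calc W ((c' ^ j * w : Kˣ) : K) = W (((c' : K)) ^ j * (w : K)) := by push_cast; ring_nf
        _ = (σ ^ j) (W (w : K)) := (hσjW j (w : K)).symm
        _ = (σ ^ j) (W (u : K)) := by rw [hw]
        _ = W (((c' : K)) ^ j * (u : K)) := hσjW j (u : K)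
        _ = W (v : K) := hj
      · intro w1 _ w2 _ h
        exact mul_left_cancel h
    set k := (fib 1).card with hk
    have hfibcard : ∀ u : Kˣ, (fib u).card = k := fun u =>
      le_antisymm (hfib_le u 1) (hfib_le 1 u)
    set V : Finset L := Finset.univ.image (fun u : Kˣ => W ↑u) with hV
    set T : L := ∑ v ∈ V, v with hT
    have hmaps : ∀ u : Kˣ, u ∈ Finset.univ → W (u : K) ∈ V :=
      fun u _ => Finset.mem_image_of_mem _ (Finset.mem_univ u)
    have hkT : (k : L) * T = (Fintype.card K : L) := by
      rw [← hWsum, ← Finset.sum_fiberwise_of_maps_to hmaps (fun u : Kˣ => W (u : K))]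
      rw [hT, Finset.mul_sum]
      apply Finset.sum_congr rfl
      intro v hv
      obtain ⟨u, -, rfl⟩ := Finset.mem_image.mp hv
      have h1 : ∀ w ∈ Finset.univ.filter (fun w : Kˣ => W ↑w = W ↑u), W (w : K) = W (u : K) :=
        fun w hw => (Finset.mem_filter.mp hw).2
      rw [Finset.sum_congr rfl h1, Finset.sum_const]
      have h2 : Finset.univ.filter (fun w : Kˣ => W ↑w = W ↑u) = fib u := rfl
      rw [h2, hfibcard, nsmul_eq_mul]
    have hcardV : m = V.card * k := by
      have h0 := Finset.card_eq_sum_card_fiberwise hmaps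
      rw [Finset.card_univ, hcardu] at h0
      rw [h0]
      have h1 : ∀ v ∈ V, (Finset.univ.filter (fun w : Kˣ => W ↑w = v)).card = k := by
        intro v hv
        obtain ⟨u, -, rfl⟩ := Finset.mem_image.mp hv
        exact hfibcard u
      rw [Finset.sum_congr rfl h1, Finset.sum_const, smul_eq_mul]
    -- Galois theory: σ generates the Galois group
    haveI hgal := IsCyclotomicExtension.isGalois {p} ℚ L
    haveI hfd : FiniteDimensional ℚ L :=
      IsCyclotomicExtension.finiteDimensional {p} ℚ L
    have hcardG : Fintype.card (L ≃ₐ[ℚ] L) = p - 1 := by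
      rw [← Nat.card_eq_fintype_card, IsGalois.card_aut_eq_finrank,
        IsCyclotomicExtension.finrank (n := p) L
          (Polynomial.cyclotomic.irreducible_rat hp.pos)]
      exact Nat.totient_prime hp
    have hσjζ : ∀ j : ℕ, (σ ^ j) ζ = ζ ^ ((γ : ZMod p).val ^ j) := by
      intro j
      induction j with
      | zero => simp
      | succ j ih =>
        rw [pow_succ' σ j, AlgEquiv.mul_apply, ih, map_pow, hσ, ← pow_mul, ← pow_succ']
    have hdvd : ∀ d : ℕ, σ ^ d = 1 → (p - 1) ∣ d := by
      intro d hd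
      have h0 : ζ ^ ((γ : ZMod p).val ^ d) = ζ ^ 1 := by
        rw [← hσjζ, hd, pow_one]; rfl
      have h1 : (γ : ZMod p).val ^ d % p = 1 % p := by
        apply hζ.pow_inj (Nat.mod_lt _ hp.pos) (Nat.mod_lt _ hp.pos)
        rw [← hzmod, ← hzmod, h0]
      have h2 : γ ^ d = 1 := by
        ext
        have h3 : (((γ : ZMod p).val ^ d : ℕ) : ZMod p) = ((1 : ℕ) : ZMod p) :=
          (ZMod.natCast_eq_natCast_iff _ _ _).mpr h1
        push_cast at h3
        rw [ZMod.natCast_val, ZMod.cast_id] at h3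
        simpa using h3
      rw [← hγ]
      exact orderOf_dvd_of_pow_eq_one h2
    have hordσ : orderOf σ = p - 1 :=
      Nat.dvd_antisymm (hcardG ▸ orderOf_dvd_card) (hdvd _ (pow_orderOf_eq_one σ))
    have hgen : ∀ g : L ≃ₐ[ℚ] L, ∃ j : ℕ, σ ^ j = g := by
      have htop : Subgroup.zpowers σ = ⊤ := by
        apply Subgroup.eq_top_of_card_eq
        rw [Nat.card_zpowers, hordσ, Nat.card_eq_fintype_card, hcardG]
      intro g
      have hmem : g ∈ Submonoid.powers σ := by
        rw [mem_powers_iff_mem_zpowers, htop]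
        trivial
      obtain ⟨j, hj⟩ := hmem
      exact ⟨j, hj⟩
    -- T is fixed by σ, hence rational; it is also an algebraic integer
    have hσT : σ T = T := by
      have hinj : ∀ x ∈ V, ∀ y ∈ V, σ x = σ y → x = y :=
        fun x _ y _ h => σ.injective h
      have himg : V.image (fun v => σ v) = V := by
        apply Finset.eq_of_subset_of_card_le
        · intro v hv
          obtain ⟨w, hw, rfl⟩ := Finset.mem_image.mp hv
          obtain ⟨u, -, rfl⟩ := Finset.mem_image.mp hw
          rw [hV]
          have : σ (W (u : K)) = W ((c' * u : Kˣ) : K) := by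
            rw [hσW]; push_cast; ring_nf
          rw [this]
          exact Finset.mem_image_of_mem _ (Finset.mem_univ _)
        · rw [Finset.card_image_of_injective _ σ.injective]
      have h4 : ∑ x ∈ V.image (fun v => σ v), x = ∑ x ∈ V, σ x := Finset.sum_image hinj
      rw [hT, map_sum, ← h4, himg]
    have hσjT : ∀ j : ℕ, (σ ^ j) T = T := by
      intro j
      induction j with
      | zero => rfl
      | succ j ih => rw [pow_succ' σ j, AlgEquiv.mul_apply, ih, hσT]
    have hTbot : T ∈ (⊥ : IntermediateField ℚ L) := by
      rw [← IsGalois.fixedField_fixingSubgroup (⊥ : IntermediateField ℚ L)]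
      intro g
      obtain ⟨j, hj⟩ := hgen ↑g
      show (g : L ≃ₐ[ℚ] L) T = T
      rw [← hj, hσjT]
    obtain ⟨r, hr⟩ := IntermediateField.mem_bot.mp hTbot
    have hζint : IsIntegral ℤ ζ := IsIntegral.of_pow hp.pos (hzp ▸ isIntegral_one)
    have hWint : ∀ u : K, IsIntegral ℤ (W u) := by
      intro u
      rw [hW]
      apply IsIntegral.sum
      intro x _
      rw [hψ]
      exact hζint.pow _
    have hTint : IsIntegral ℤ T := by
      rw [hT]
      apply IsIntegral.sum
      intro v hv
      obtain ⟨u, -, rfl⟩ := Finset.mem_image.mp hv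
      exact hWint _
    have hrint : IsIntegral ℤ r := by
      rw [← hr] at hTint
      exact (isIntegral_algebraMap_iff (algebraMap ℚ L).injective).mp hTint
    obtain ⟨t, ht⟩ := IsIntegrallyClosed.isIntegral_iff.mp hrint
    -- k divides both q and q - 1, hence k = 1 and W is injective on Kˣ
    have hqQ : (k : ℚ) * (t : ℚ) = (Fintype.card K : ℚ) := by
      apply (algebraMap ℚ L).injective
      rw [map_mul, map_natCast]
      have h1 : (algebraMap ℚ L) ((t : ℤ) : ℚ) = T := by
        rw [show ((t : ℤ) : ℚ) = algebraMap ℤ ℚ t by simp, ht, hr]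
      rw [h1, hkT, map_natCast]
    have hqZ : (k : ℤ) * t = (Fintype.card K : ℤ) := by exact_mod_cast hqQ
    have hkdvd_q : k ∣ Fintype.card K := by
      have : (k : ℤ) ∣ (Fintype.card K : ℤ) := ⟨t, hqZ.symm⟩
      exact_mod_cast this
    have hkdvd_m : k ∣ m := ⟨V.card, by rw [hcardV, Nat.mul_comm]⟩
    have hkone : k = 1 := by
      have h1 : k ∣ Fintype.card K - m := Nat.dvd_sub hkdvd_q hkdvd_m
      have h2 : Fintype.card K - m = 1 := by rw [hcard]; omega
      rw [h2] at h1
      exact Nat.dvd_one.mp h1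
    have hWinj : ∀ u v : Kˣ, W (u : K) = W (v : K) → u = v := by
      intro u v huv
      have h1 : u ∈ fib v := by
        simp only [hfib, Finset.mem_filter, Finset.mem_univ, true_and]
        exact huv
      have h2 : v ∈ fib v := by
        simp only [hfib, Finset.mem_filter, Finset.mem_univ, true_and]
      exact Finset.card_le_one.mp (le_of_eq (by rw [hfibcard v, hkone])) u h1 v h2
    -- every unit is a power of c'
    have hcpow : ∀ v : Kˣ, ∃ j : ℕ, c' ^ j = v := by
      intro v
      obtain ⟨j, hj⟩ := hstep 1 v
      refine ⟨j, hWinj _ _ ?_⟩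
      rw [← hj]
      congr 1
      push_cast
      ring
    have hb1 : (g'⁻¹) ^ (p - 1) = 1 := by rw [inv_pow, hgpow, inv_one]
    have hc_p1 : c' ^ (p - 1) = 1 := by
      rw [hcdef, mul_pow, hgpow, one_mul, hbdef, pow_right_comm, hb1, one_pow]
    have hall : ∀ v : Kˣ, v ^ (p - 1) = 1 := by
      intro v
      obtain ⟨j, rfl⟩ := hcpow v
      rw [← pow_mul, Nat.mul_comm, pow_mul, hc_p1, one_pow]
    have hexp : m ∣ p - 1 := by
      have h1 : Monoid.exponent Kˣ ∣ p - 1 := Monoid.exponent_dvd_of_forall_pow_eq_one hall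
      rwa [IsCyclic.exponent_eq_card, Nat.card_eq_fintype_card, hcardu] at h1
    have hqlep : m ≤ p - 1 := Nat.le_of_dvd (by have := hp.two_le; omega) hexp
    by_cases hp2 : p = 2
    · subst hp2
      rw [hcard]
      omega
    · exfalso
      have hodd : Odd p := hp.odd_of_ne_two hp2
      have hp3 : 3 ≤ p := by
        rcases hp.two_le.lt_or_eq with h | h
        · omega
        · exact absurd h.symm hp2
      have hmeven : 2 ∣ m := by
        obtain ⟨r, hr'⟩ := hodd.pow (n := n)
        omega
      have hs'odd : Odd s' := by
        have h1 : s * s' ≡ 1 [MOD 2] := Nat.ModEq.of_dvd hmeven hss'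
        have h2 : (s * s') % 2 = 1 := by simpa [Nat.ModEq] using h1
        exact (Nat.odd_mul.mp (Nat.odd_iff.mpr h2)).2
      obtain ⟨w, hw⟩ := hs'odd
      have hp1even : 2 ∣ p - 1 := by obtain ⟨r, hr'⟩ := hodd; omega
      set A := (p - 1) / 2 with hA
      have h2A : 2 * A = p - 1 := by omega
      have hbA : b' ^ A = (g'⁻¹) ^ A * ((g'⁻¹) ^ (p - 1)) ^ w := by
        rw [hbdef, ← pow_mul, ← pow_mul, ← pow_add]
        congr 1
        rw [hw, ← h2A]
        ring
      have hcA : c' ^ A = 1 := by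
        rw [hcdef, mul_pow, hbA, hb1, one_pow, mul_one, ← mul_pow, mul_inv_cancel, one_pow]
      have hallA : ∀ v : Kˣ, v ^ A = 1 := by
        intro v
        obtain ⟨j, rfl⟩ := hcpow v
        rw [← pow_mul, Nat.mul_comm, pow_mul, hcA, one_pow]
      have hexpA : m ∣ A := by
        have h1 : Monoid.exponent Kˣ ∣ A := Monoid.exponent_dvd_of_forall_pow_eq_one hallA
        rwa [IsCyclic.exponent_eq_card, Nat.card_eq_fintype_card, hcardu] at h1
      have hmA : m ≤ A := Nat.le_of_dvd (by omega) hexpA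
      have hple : p ≤ p ^ n := Nat.le_self_pow hn.ne' p
      omega
  · intro hcard2 A B ⟨u, hu⟩ ⟨v, hv⟩
    have hcu : Fintype.card Kˣ = 1 := by
      rw [Fintype.card_units, hcard2]
    have huv : u = v := Fintype.card_le_one_iff.mp hcu.le u v
    exact ⟨0, by rw [pow_zero, ← hu, ← hv, huv]; rfl⟩
end
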